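/- arXiv:1508.00714 — 4 statements merged into one kernel-verified Lean document; each statement's English description precedes it below -/
import Mathlib

section
/- Let 0 < s < 1 and μ > 0 be real numbers. Then the integrand below is nonnegative and Lebesgue integrable on (0,∞), and s · ∫₀^∞ (cosh t − e^{−μt}) · (sinh t)^{−s−1} dt = 2^s · Γ(1−s) · Γ((μ+1+s)/2) / Γ((μ+1−s)/2). -/
open MeasureTheory Real

noncomputable section

lemma realBeta {u v : ℝ} (hu : 0 < u) (hv : 0 < v) :
    ∫ x in Set.Ioo (0:ℝ) 1, x ^ (u-1) * (1-x) ^ (v-1)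
      = Real.Gamma u * Real.Gamma v / Real.Gamma (u+v) := by
  have key : Complex.Gamma u * Complex.Gamma v
      = Complex.Gamma (u+v) * Complex.betaIntegral u v :=
    Complex.Gamma_mul_Gamma_eq_betaIntegral (by simpa using hu) (by simpa using hv)
  have hbeta : Complex.betaIntegral u v
      = ((∫ x in Set.Ioo (0:ℝ) 1, x ^ (u-1) * (1-x) ^ (v-1) : ℝ) : ℂ) := by
    rw [Complex.betaIntegral]
    have hcong : Set.EqOn (fun x : ℝ => (x:ℂ) ^ ((u:ℂ)-1) * ((1:ℂ)-(x:ℂ)) ^ ((v:ℂ)-1))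
        (fun x : ℝ => ((x ^ (u-1) * (1-x) ^ (v-1) : ℝ) : ℂ)) (Set.uIcc (0:ℝ) 1) := by
      intro x hx
      rw [Set.uIcc_of_le zero_le_one, Set.mem_Icc] at hx
      have h0 : (0:ℝ) ≤ x := hx.1
      have h1 : (0:ℝ) ≤ 1 - x := by linarith [hx.2]
      simp only
      push_cast [Complex.ofReal_cpow h0, Complex.ofReal_cpow h1]
      ring
    rw [intervalIntegral.integral_congr hcong, intervalIntegral.integral_ofReal,
      intervalIntegral.integral_of_le zero_le_one,
      MeasureTheory.integral_Ioc_eq_integral_Ioo]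
  rw [hbeta] at key
  have huv : Complex.Gamma (↑u + ↑v) = ((Real.Gamma (u+v) : ℝ) : ℂ) := by
    rw [← Complex.ofReal_add, Complex.Gamma_ofReal]
  rw [huv, Complex.Gamma_ofReal, Complex.Gamma_ofReal] at key
  have hne := (Real.Gamma_pos_of_pos (by linarith : 0 < u + v)).ne'
  norm_cast at key
  field_simp
  linarith [key]

lemma sinh_int {b s : ℝ} (hb : 0 < b) (hs0 : 0 < s) (hs1 : s < 1) :
    ∫ t in Set.Ioi (0:ℝ), Real.exp (-b*t) * Real.sinh t ^ (-s)
      = 2^(s-1) * (Real.Gamma ((b+s)/2) * Real.Gamma (1-s)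
          / Real.Gamma ((b+s)/2 + (1-s))) := by
  set φ : ℝ → ℝ := fun x => -Real.log x / 2 with hφ
  have hderiv : ∀ x ∈ Set.Ioo (0:ℝ) 1, HasDerivWithinAt φ (-x⁻¹/2) (Set.Ioo 0 1) x := by
    intro x hx
    exact ((Real.hasDerivAt_log hx.1.ne').neg.div_const 2).hasDerivWithinAt
  have hinj : Set.InjOn φ (Set.Ioo (0:ℝ) 1) := by
    intro x hx y hy hxy
    have : Real.log x = Real.log y := by
      have := congrArg (fun z => (-2:ℝ) * z) hxy
      simp only [hφ] at this
      field_simp at this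
      linarith
    exact Real.log_injOn_pos (Set.mem_Ioi.2 hx.1) (Set.mem_Ioi.2 hy.1) this
  have himg : φ '' Set.Ioo (0:ℝ) 1 = Set.Ioi (0:ℝ) := by
    ext y
    constructor
    · rintro ⟨x, hx, rfl⟩
      have : Real.log x < 0 := Real.log_neg hx.1 hx.2
      simp only [hφ, Set.mem_Ioi]
      linarith
    · intro hy
      refine ⟨Real.exp (-2*y), ⟨Real.exp_pos _, ?_⟩, ?_⟩
      · rw [Real.exp_lt_one_iff]
        simp only [Set.mem_Ioi] at hy; linarith
      · simp only [hφ, Real.log_exp]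
        ring
  have key := MeasureTheory.integral_image_eq_integral_abs_deriv_smul measurableSet_Ioo
    hderiv hinj (fun t => Real.exp (-b*t) * Real.sinh t ^ (-s))
  rw [himg] at key
  rw [key]
  have hcong : ∀ x ∈ Set.Ioo (0:ℝ) 1,
      |(-x⁻¹/2)| • (Real.exp (-b * φ x) * Real.sinh (φ x) ^ (-s))
        = 2^(s-1) * (x ^ ((b+s)/2 - 1) * (1-x) ^ ((1-s) - 1)) := by
    intro x hx
    have hx0 : 0 < x := hx.1
    have hx1 : 0 < 1 - x := by linarith [hx.2]
    have habs : |(-x⁻¹/2)| = x⁻¹/2 := by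
      have h3 : (0:ℝ) < x⁻¹/2 := by positivity
      rw [abs_of_nonpos (by linarith)]; ring
    have hexp : Real.exp (-b * φ x) = x ^ (b/2) := by
      rw [show -b * φ x = Real.log x * (b/2) by simp [hφ]; ring,
        ← Real.rpow_def_of_pos hx0]
    have hsinh : Real.sinh (φ x) = (1-x) * x ^ (-(1/2):ℝ) / 2 := by
      rw [hφ]
      simp only
      rw [Real.sinh_eq]
      rw [show -(-Real.log x / 2) = Real.log x * (1/2) by ring,
          show -Real.log x / 2 = Real.log x * (-(1/2)) by ring,
        ← Real.rpow_def_of_pos hx0, ← Real.rpow_def_of_pos hx0]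
      have : x ^ ((1:ℝ)/2) = x * x ^ (-(1/2):ℝ) := by
        rw [show (1:ℝ)/2 = 1 + (-(1/2)) by ring, Real.rpow_add hx0, Real.rpow_one]
        norm_num
      rw [this]
      ring
    rw [habs, hexp, hsinh]
    have h2 : ((1-x) * x ^ (-(1/2):ℝ) / 2) ^ (-s)
        = (1-x)^(-s) * x ^ (s/2) * 2 ^ s := by
      rw [div_eq_mul_inv, Real.mul_rpow (by positivity) (by positivity),
        Real.mul_rpow hx1.le (by positivity),
        Real.inv_rpow (by norm_num : (0:ℝ) ≤ 2), Real.rpow_neg (by norm_num : (0:ℝ) ≤ 2),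
        inv_inv, ← Real.rpow_mul hx0.le,
        show (-(1/2):ℝ) * (-s) = s/2 by ring]
    rw [h2]
    have hxinv : x⁻¹ = x ^ (-1:ℝ) := by rw [Real.rpow_neg_one]
    rw [smul_eq_mul, hxinv]
    rw [show x ^ ((b+s)/2 - 1) = x ^ (b/2) * x ^ (s/2) * x ^ (-1:ℝ) by
      rw [← Real.rpow_add hx0, ← Real.rpow_add hx0]; ring_nf,
      show ((1:ℝ)-s) - 1 = -s by ring,
      show (2:ℝ)^(s-1) = 2^s / 2 by
        rw [Real.rpow_sub two_pos, Real.rpow_one]]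
    ring
  rw [MeasureTheory.setIntegral_congr_fun measurableSet_Ioo hcong,
    MeasureTheory.integral_const_mul,
    realBeta (by positivity) (by linarith)]

lemma sinh_ge {t : ℝ} (ht : 1 ≤ t) : Real.exp t / 4 ≤ Real.sinh t := by
  have h2 : (2:ℝ) ≤ Real.exp t :=
    le_trans (by linarith [Real.add_one_le_exp 1]) (Real.exp_le_exp.2 ht)
  have h3 : Real.exp t * Real.exp (-t) = 1 := by rw [← Real.exp_add]; simp
  rw [Real.sinh_eq]
  nlinarith [Real.exp_pos (-t), Real.exp_pos t]

lemma exp_rpow' (t y : ℝ) : Real.exp t ^ y = Real.exp (t * y) := by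
  rw [Real.rpow_def_of_pos (Real.exp_pos t), Real.log_exp]

lemma f_int {s μ : ℝ} (hs0 : 0 < s) (hs1 : s < 1) (hμ : 0 < μ) :
    IntegrableOn (fun t : ℝ =>
        (Real.cosh t - Real.exp (-μ * t)) * Real.sinh t ^ (-s - 1))
      (Set.Ioi (0 : ℝ)) volume := by
  set f : ℝ → ℝ := fun t => (Real.cosh t - Real.exp (-μ * t)) * Real.sinh t ^ (-s - 1) with hf
  have hcont : ContinuousOn f (Set.Ioi (0:ℝ)) := by
    apply ContinuousOn.mul
    · exact (Real.continuous_cosh.sub (by continuity)).continuousOn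
    · refine ContinuousOn.rpow_const Real.continuous_sinh.continuousOn (fun t ht => ?_)
      exact Or.inl (Real.sinh_pos_iff.2 ht).ne'
  rw [← Set.Ioc_union_Ioi_eq_Ioi (zero_le_one : (0:ℝ) ≤ 1)]
  apply MeasureTheory.IntegrableOn.union
  · have hbound : IntegrableOn (fun t : ℝ => (Real.exp 1 + μ) * t ^ (-s))
        (Set.Ioc (0:ℝ) 1) volume := by
      refine Integrable.const_mul ?_ _
      exact (intervalIntegrable_iff_integrableOn_Ioc_of_le zero_le_one).1
        (intervalIntegral.intervalIntegrable_rpow' (by linarith))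
    refine Integrable.mono' hbound
      ((hcont.mono Set.Ioc_subset_Ioi_self).aestronglyMeasurable measurableSet_Ioc) ?_
    rw [ae_restrict_iff' measurableSet_Ioc]
    refine Filter.Eventually.of_forall (fun t ht => ?_)
    have ht0 : 0 < t := ht.1
    have ht1 : t ≤ 1 := ht.2
    have hsp : 0 < Real.sinh t := Real.sinh_pos_iff.2 ht0
    have hst : t ≤ Real.sinh t := Real.self_le_sinh_iff.2 ht0.le
    have hr : Real.sinh t ^ (-s-1) ≤ t ^ (-s-1) :=
      Real.rpow_le_rpow_of_nonpos ht0 hst (by linarith)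
    have he1 : 1 - Real.exp (-t) ≤ t := by linarith [Real.add_one_le_exp (-t)]
    have he1' : 0 ≤ 1 - Real.exp (-t) := by
      have : Real.exp (-t) ≤ 1 := Real.exp_le_one_iff.2 (by linarith)
      linarith
    have he2 : 1 - Real.exp (-μ*t) ≤ μ * t := by linarith [Real.add_one_le_exp (-μ*t)]
    have he3 : Real.exp t ≤ Real.exp 1 := Real.exp_le_exp.2 ht1
    have hee : Real.exp t * Real.exp (-t) = 1 := by rw [← Real.exp_add]; simp
    have hemu : Real.exp (-μ*t) ≤ 1 := Real.exp_le_one_iff.2 (by nlinarith)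
    have k1 : Real.exp t * ((1 - Real.exp (-t)) * (1 - Real.exp (-t)))
        ≤ Real.exp 1 * (t * t) :=
      mul_le_mul he3 (mul_le_mul he1 he1 he1' ht0.le) (by positivity) (Real.exp_pos 1).le
    have h4 : Real.cosh t - Real.exp (-μ*t) ≤ (Real.exp 1 + μ) * t := by
      rw [Real.cosh_eq]
      nlinarith [Real.exp_pos t, Real.exp_pos (-t)]
    have h5 : 0 ≤ Real.cosh t - Real.exp (-μ*t) := by linarith [Real.one_le_cosh t]
    have hfb : f t ≤ ((Real.exp 1 + μ) * t) * t ^ (-s-1) := by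
      calc f t ≤ (Real.cosh t - Real.exp (-μ*t)) * t ^ (-s-1) :=
            mul_le_mul_of_nonneg_left hr h5
        _ ≤ ((Real.exp 1 + μ) * t) * t ^ (-s-1) :=
            mul_le_mul_of_nonneg_right h4 (Real.rpow_nonneg ht0.le _)
    have hnorm : ‖f t‖ = f t :=
      Real.norm_of_nonneg (mul_nonneg h5 (Real.rpow_nonneg hsp.le _))
    rw [hnorm]
    calc f t ≤ ((Real.exp 1 + μ) * t) * t ^ (-s-1) := hfb
      _ = (Real.exp 1 + μ) * t ^ (-s) := by
          rw [show (-s:ℝ) = (-s-1)+1 by ring, Real.rpow_add_one ht0.ne']; ring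
  · have hbound : IntegrableOn (fun t : ℝ => 16 * Real.exp (-s * t))
        (Set.Ioi (1:ℝ)) volume :=
      Integrable.const_mul (exp_neg_integrableOn_Ioi 1 hs0) 16
    refine Integrable.mono' hbound
      ((hcont.mono (Set.Ioi_subset_Ioi zero_le_one)).aestronglyMeasurable measurableSet_Ioi) ?_
    rw [ae_restrict_iff' measurableSet_Ioi]
    refine Filter.Eventually.of_forall (fun t ht => ?_)
    have ht1 : 1 ≤ t := le_of_lt ht
    have ht0 : 0 < t := lt_of_lt_of_le zero_lt_one ht1
    have hsp : 0 < Real.sinh t := Real.sinh_pos_iff.2 ht0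
    have hq : 0 < Real.exp t / 4 := by positivity
    have hr : Real.sinh t ^ (-s-1) ≤ (Real.exp t / 4) ^ (-s-1) :=
      Real.rpow_le_rpow_of_nonpos hq (sinh_ge ht1) (by linarith)
    have hrv : (Real.exp t / 4) ^ (-s-1) = Real.exp (t * (-s-1)) * 4 ^ (s+1) := by
      rw [Real.div_rpow (Real.exp_pos t).le (by norm_num : (0:ℝ) ≤ 4), exp_rpow',
        show (-s-1 : ℝ) = -(s+1) by ring, Real.rpow_neg (by norm_num : (0:ℝ) ≤ 4)]
      rw [div_eq_mul_inv, inv_inv]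
    have hcosh : Real.cosh t ≤ Real.exp t := by
      have := Real.sinh_add_cosh t
      linarith
    have hemu : Real.exp (-μ*t) ≤ 1 := Real.exp_le_one_iff.2 (by nlinarith)
    have h5 : 0 ≤ Real.cosh t - Real.exp (-μ*t) := by linarith [Real.one_le_cosh t]
    have h16 : (4:ℝ) ^ (s+1) ≤ 16 := by
      calc (4:ℝ) ^ (s+1) ≤ 4 ^ (2:ℝ) :=
            Real.rpow_le_rpow_of_exponent_le (by norm_num) (by linarith)
        _ = 16 := by
            rw [show (2:ℝ) = ((2:ℕ):ℝ) by norm_num, Real.rpow_natCast]; norm_num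
    have hnorm : ‖f t‖ = f t :=
      Real.norm_of_nonneg (mul_nonneg h5 (Real.rpow_nonneg hsp.le _))
    rw [hnorm]
    calc f t ≤ Real.cosh t * Real.sinh t ^ (-s-1) := by
          apply mul_le_mul_of_nonneg_right _ (Real.rpow_nonneg hsp.le _)
          linarith [Real.exp_pos (-μ*t)]
      _ ≤ Real.exp t * ((Real.exp t / 4) ^ (-s-1)) := by
          apply mul_le_mul hcosh hr (Real.rpow_nonneg hsp.le _) (Real.exp_pos t).le
      _ = Real.exp (-s*t) * 4 ^ (s+1) := by
          rw [hrv, ← mul_assoc, ← Real.exp_add]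
          ring_nf
      _ ≤ 16 * Real.exp (-s * t) := by
          have := Real.exp_pos (-s*t)
          nlinarith

lemma h_int {s μ : ℝ} (hs0 : 0 < s) (hs1 : s < 1) (hμ : 0 < μ) :
    IntegrableOn (fun t : ℝ => Real.exp (-(μ+1) * t) * Real.sinh t ^ (-s))
      (Set.Ioi (0 : ℝ)) volume := by
  set h : ℝ → ℝ := fun t => Real.exp (-(μ+1) * t) * Real.sinh t ^ (-s) with hh
  have hcont : ContinuousOn h (Set.Ioi (0:ℝ)) := by
    apply ContinuousOn.mul
    · exact (by continuity : Continuous fun t : ℝ => Real.exp (-(μ+1)*t)).continuousOn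
    · refine ContinuousOn.rpow_const Real.continuous_sinh.continuousOn (fun t ht => ?_)
      exact Or.inl (Real.sinh_pos_iff.2 ht).ne'
  rw [← Set.Ioc_union_Ioi_eq_Ioi (zero_le_one : (0:ℝ) ≤ 1)]
  apply MeasureTheory.IntegrableOn.union
  · have hbound : IntegrableOn (fun t : ℝ => t ^ (-s)) (Set.Ioc (0:ℝ) 1) volume :=
      (intervalIntegrable_iff_integrableOn_Ioc_of_le zero_le_one).1
        (intervalIntegral.intervalIntegrable_rpow' (by linarith))
    refine Integrable.mono' hbound
      ((hcont.mono Set.Ioc_subset_Ioi_self).aestronglyMeasurable measurableSet_Ioc) ?_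
    rw [ae_restrict_iff' measurableSet_Ioc]
    refine Filter.Eventually.of_forall (fun t ht => ?_)
    have ht0 : 0 < t := ht.1
    have hsp : 0 < Real.sinh t := Real.sinh_pos_iff.2 ht0
    have hst : t ≤ Real.sinh t := Real.self_le_sinh_iff.2 ht0.le
    have hr : Real.sinh t ^ (-s) ≤ t ^ (-s) :=
      Real.rpow_le_rpow_of_nonpos ht0 hst (by linarith)
    have hex : Real.exp (-(μ+1)*t) ≤ 1 := Real.exp_le_one_iff.2 (by nlinarith)
    have hnorm : ‖h t‖ = h t :=
      Real.norm_of_nonneg (mul_nonneg (Real.exp_pos _).le (Real.rpow_nonneg hsp.le _))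
    rw [hnorm]
    calc h t ≤ 1 * Real.sinh t ^ (-s) :=
          mul_le_mul_of_nonneg_right hex (Real.rpow_nonneg hsp.le _)
      _ = Real.sinh t ^ (-s) := one_mul _
      _ ≤ t ^ (-s) := hr
  · have hbound : IntegrableOn (fun t : ℝ => Real.sinh 1 ^ (-s) * Real.exp (-(μ+1) * t))
        (Set.Ioi (1:ℝ)) volume :=
      Integrable.const_mul (exp_neg_integrableOn_Ioi 1 (by linarith)) _
    refine Integrable.mono' hbound
      ((hcont.mono (Set.Ioi_subset_Ioi zero_le_one)).aestronglyMeasurable measurableSet_Ioi) ?_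
    rw [ae_restrict_iff' measurableSet_Ioi]
    refine Filter.Eventually.of_forall (fun t ht => ?_)
    have ht1 : 1 ≤ t := le_of_lt ht
    have ht0 : 0 < t := lt_of_lt_of_le zero_lt_one ht1
    have hsp : 0 < Real.sinh t := Real.sinh_pos_iff.2 ht0
    have hs1p : 0 < Real.sinh 1 := Real.sinh_pos_iff.2 zero_lt_one
    have hmono : Real.sinh 1 ≤ Real.sinh t := Real.sinh_le_sinh.2 ht1
    have hr : Real.sinh t ^ (-s) ≤ Real.sinh 1 ^ (-s) :=
      Real.rpow_le_rpow_of_nonpos hs1p hmono (by linarith)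
    have hnorm : ‖h t‖ = h t :=
      Real.norm_of_nonneg (mul_nonneg (Real.exp_pos _).le (Real.rpow_nonneg hsp.le _))
    rw [hnorm]
    calc h t ≤ Real.exp (-(μ+1)*t) * Real.sinh 1 ^ (-s) :=
          mul_le_mul_of_nonneg_left hr (Real.exp_pos _).le
      _ = Real.sinh 1 ^ (-s) * Real.exp (-(μ+1)*t) := by ring

/-- Subordination identity for the conformally invariant fractional
sublaplacian (key step in the proof of Proposition 4.1):
s ∫₀^∞ (cosh t − e^{−μt}) (sinh t)^{−s−1} dt
  = 2^s Γ(1−s) Γ((μ+1+s)/2) / Γ((μ+1−s)/2). -/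
theorem subordination_identity_nonhomogeneous (s μ : ℝ)
    (hs0 : 0 < s) (hs1 : s < 1) (hμ : 0 < μ) :
    (∀ t ∈ Set.Ioi (0 : ℝ),
      0 ≤ (Real.cosh t - Real.exp (-μ * t)) * Real.sinh t ^ (-s - 1)) ∧
    IntegrableOn (fun t : ℝ =>
        (Real.cosh t - Real.exp (-μ * t)) * Real.sinh t ^ (-s - 1))
      (Set.Ioi (0 : ℝ)) volume ∧
    s * ∫ t in Set.Ioi (0 : ℝ),
        (Real.cosh t - Real.exp (-μ * t)) * Real.sinh t ^ (-s - 1)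
      = (2 : ℝ) ^ s * Real.Gamma (1 - s) * Real.Gamma ((μ + 1 + s) / 2) /
          Real.Gamma ((μ + 1 - s) / 2) := by
  have hpos : ∀ t ∈ Set.Ioi (0 : ℝ),
      0 ≤ (Real.cosh t - Real.exp (-μ * t)) * Real.sinh t ^ (-s - 1) := by
    intro t ht
    have ht0 : (0:ℝ) < t := ht
    have hemu : Real.exp (-μ*t) ≤ 1 := Real.exp_le_one_iff.2 (by nlinarith)
    have h5 : 0 ≤ Real.cosh t - Real.exp (-μ*t) := by linarith [Real.one_le_cosh t]
    exact mul_nonneg h5 (Real.rpow_nonneg (Real.sinh_pos_iff.2 ht0).le _)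
  have hfi := f_int hs0 hs1 hμ
  refine ⟨hpos, hfi, ?_⟩
  have hhi := h_int hs0 hs1 hμ
  -- the antiderivative G
  set G : ℝ → ℝ := fun t => (Real.exp (-(μ+1)*t) - 1) * Real.sinh t ^ (-s) with hG
  set f : ℝ → ℝ := fun t =>
    (Real.cosh t - Real.exp (-μ * t)) * Real.sinh t ^ (-s - 1) with hf
  set h : ℝ → ℝ := fun t => Real.exp (-(μ+1) * t) * Real.sinh t ^ (-s) with hh
  have hderiv : ∀ t ∈ Set.Ioi (0:ℝ),
      HasDerivAt G (s * f t - (μ+1-s) * h t) t := by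
    intro t ht
    have ht0 : (0:ℝ) < t := ht
    have hsp : 0 < Real.sinh t := Real.sinh_pos_iff.2 ht0
    have d1 : HasDerivAt (fun t : ℝ => Real.exp (-(μ+1)*t) - 1)
        (Real.exp (-(μ+1)*t) * (-(μ+1))) t := by
      simpa using (((hasDerivAt_id t).const_mul (-(μ+1))).exp).sub_const 1
    have d2 : HasDerivAt (fun t : ℝ => Real.sinh t ^ (-s))
        (Real.cosh t * (-s) * Real.sinh t ^ (-s-1)) t :=
      (Real.hasDerivAt_sinh t).rpow_const (Or.inl hsp.ne')
    have := d1.mul d2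
    convert this using 1
    case e'_4 => rfl
    case e'_5 => rfl
    case e'_8 => rfl
    have hPS : Real.sinh t ^ (-s) = Real.sinh t ^ (-s-1) * Real.sinh t := by
      rw [← Real.rpow_add_one hsp.ne' (-s-1)]
      ring_nf
    have hEC : Real.exp (-(μ+1)*t) * (Real.sinh t + Real.cosh t) = Real.exp (-μ*t) := by
      rw [Real.sinh_add_cosh, ← Real.exp_add]
      ring_nf
    simp only [hf, hh, hG]
    rw [hPS]
    linear_combination (s * Real.sinh t ^ (-s-1)) * hEC
  have hGtop : Filter.Tendsto G Filter.atTop (nhds 0) := by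
    have t1 : Filter.Tendsto (fun t : ℝ => Real.exp (-(μ+1)*t) - 1)
        Filter.atTop (nhds (-1)) := by
      have : Filter.Tendsto (fun t : ℝ => Real.exp (-(μ+1)*t)) Filter.atTop (nhds 0) := by
        have hb : Filter.Tendsto (fun t : ℝ => (μ+1)*t) Filter.atTop Filter.atTop :=
          Filter.Tendsto.const_mul_atTop (by linarith) Filter.tendsto_id
        have h1 : Filter.Tendsto (fun t : ℝ => Real.exp (-((μ+1)*t)))
            Filter.atTop (nhds 0) := Real.tendsto_exp_neg_atTop_nhds_zero.comp hb
        exact h1.congr (fun t => by rw [neg_mul])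
      simpa using this.sub_const 1
    have t2 : Filter.Tendsto (fun t : ℝ => Real.sinh t ^ (-s)) Filter.atTop (nhds 0) := by
      have hsinh : Filter.Tendsto Real.sinh Filter.atTop Filter.atTop := by
        apply Filter.tendsto_atTop_mono' _ _ Filter.tendsto_id
        filter_upwards [Filter.eventually_ge_atTop (0:ℝ)] with t ht
        exact Real.self_le_sinh_iff.2 ht
      exact (tendsto_rpow_neg_atTop hs0).comp hsinh
    have h3 := t1.mul t2
    rw [show (-1:ℝ) * 0 = 0 by ring] at h3
    exact h3
  have hG0 : G 0 = 0 := by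
    simp [hG]
  have hGcont : ContinuousWithinAt G (Set.Ici (0:ℝ)) 0 := by
    rw [ContinuousWithinAt, hG0]
    -- squeeze between -(μ+1) * t^(1-s) and 0
    have hlow : Filter.Tendsto (fun t : ℝ => -((μ+1) * t ^ (1-s)))
        (nhdsWithin 0 (Set.Ici (0:ℝ))) (nhds 0) := by
      have hc : Filter.Tendsto (fun t : ℝ => t ^ (1-s)) (nhds 0) (nhds 0) := by
        have := (Real.continuousAt_rpow_const 0 (1-s) (Or.inr (by linarith))).tendsto
        simpa [Real.zero_rpow (by linarith : (1:ℝ)-s ≠ 0)] using this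
      have h2 := ((hc.const_mul (μ+1)).neg).mono_left
        (nhdsWithin_le_nhds : nhdsWithin (0:ℝ) (Set.Ici 0) ≤ nhds 0)
      simpa using h2
    refine tendsto_of_tendsto_of_tendsto_of_le_of_le' hlow tendsto_const_nhds ?_ ?_
    · filter_upwards [self_mem_nhdsWithin] with t ht
      rcases eq_or_lt_of_le (Set.mem_Ici.1 ht) with h0 | h0
      · rw [← h0]
        simp [hG, Real.zero_rpow (by linarith : -s ≠ 0),
          Real.zero_rpow (by linarith : (1:ℝ)-s ≠ 0)]
      · have hsp : 0 < Real.sinh t := Real.sinh_pos_iff.2 h0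
        have hst : t ≤ Real.sinh t := Real.self_le_sinh_iff.2 h0.le
        have hr : Real.sinh t ^ (-s) ≤ t ^ (-s) :=
          Real.rpow_le_rpow_of_nonpos h0 hst (by linarith)
        have he : 1 - Real.exp (-(μ+1)*t) ≤ (μ+1) * t := by
          linarith [Real.add_one_le_exp (-(μ+1)*t)]
        have hex : Real.exp (-(μ+1)*t) ≤ 1 := Real.exp_le_one_iff.2 (by nlinarith)
        have hts : t ^ (1-s) = t * t ^ (-s) := by
          rw [show (1:ℝ)-s = -s + 1 by ring, Real.rpow_add_one h0.ne', mul_comm]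
        simp only [hG]
        rw [hts]
        have hrn : 0 ≤ Real.sinh t ^ (-s) := Real.rpow_nonneg hsp.le _
        have htn : 0 ≤ t ^ (-s) := Real.rpow_nonneg h0.le _
        nlinarith
    · filter_upwards [self_mem_nhdsWithin] with t ht
      rcases eq_or_lt_of_le (Set.mem_Ici.1 ht) with h0 | h0
      · rw [← h0]
        simp [hG, Real.zero_rpow (by linarith : -s ≠ 0)]
      · have hsp : 0 < Real.sinh t := Real.sinh_pos_iff.2 h0
        have hex : Real.exp (-(μ+1)*t) ≤ 1 := Real.exp_le_one_iff.2 (by nlinarith)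
        have hrn : 0 ≤ Real.sinh t ^ (-s) := Real.rpow_nonneg hsp.le _
        simp only [hG]
        nlinarith
  have hint : IntegrableOn (fun t : ℝ => s * f t - (μ+1-s) * h t) (Set.Ioi (0:ℝ)) volume :=
    ((hfi.const_mul s).sub (hhi.const_mul (μ+1-s)))
  have hFTC := MeasureTheory.integral_Ioi_of_hasDerivAt_of_tendsto hGcont hderiv hint hGtop
  rw [hG0, sub_zero] at hFTC
  have hsplit : ∫ t in Set.Ioi (0:ℝ), (s * f t - (μ+1-s) * h t)
      = s * (∫ t in Set.Ioi (0:ℝ), f t) - (μ+1-s) * ∫ t in Set.Ioi (0:ℝ), h t := by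
    rw [MeasureTheory.integral_sub (hfi.const_mul s) (hhi.const_mul (μ+1-s)),
      MeasureTheory.integral_const_mul, MeasureTheory.integral_const_mul]
  rw [hsplit] at hFTC
  have hkey : s * (∫ t in Set.Ioi (0:ℝ), f t)
      = (μ+1-s) * ∫ t in Set.Ioi (0:ℝ), h t := by linarith
  have hval : ∫ t in Set.Ioi (0:ℝ), h t
      = 2^(s-1) * (Real.Gamma (((μ+1)+s)/2) * Real.Gamma (1-s)
          / Real.Gamma (((μ+1)+s)/2 + (1-s))) := sinh_int (by linarith) hs0 hs1
  rw [hval] at hkey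
  have harg : ((μ+1)+s)/2 + (1-s) = (μ+1-s)/2 + 1 := by ring
  have hxpos : (0:ℝ) < (μ+1-s)/2 := by linarith
  have hgpos : 0 < Real.Gamma ((μ+1-s)/2) := Real.Gamma_pos_of_pos hxpos
  have h2s : (2:ℝ)^(s-1) = 2^s / 2 := by
    rw [Real.rpow_sub two_pos, Real.rpow_one]
  rw [hkey, harg, Real.Gamma_add_one hxpos.ne', h2s]
  have hd : (μ + 1 - s) ≠ 0 := by linarith
  field_simp [hgpos.ne', hxpos.ne']

end
end

section
/- Let 0 < s < 1 and μ > 0 be real numbers. Then the integrand below is Lebesgue integrable on (0,∞), and (1−s) · ∫₀^∞ (1 − e^{−μt} · cosh t · (t/sinh t)^{2−s}) · t^{s−2} dt = 2^{−s} · μ · Γ(s) · Γ((μ+1−s)/2) / Γ((μ+1+s)/2). -/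
open MeasureTheory Real

noncomputable section

namespace SubordinationAux

open Set Filter Topology

lemma sinh_le_mul_cosh {t : ℝ} (ht : 0 ≤ t) : Real.sinh t ≤ t * Real.cosh t := by
  have h : MonotoneOn (fun x : ℝ => x * Real.cosh x - Real.sinh x) (Set.Ici 0) := by
    apply monotoneOn_of_deriv_nonneg (convex_Ici 0)
    · fun_prop
    · intro x hx
      exact (((hasDerivAt_id x).mul (Real.hasDerivAt_cosh x)).sub
        (Real.hasDerivAt_sinh x)).differentiableAt.differentiableWithinAt
    · intro x hx
      rw [interior_Ici] at hx
      have hd : HasDerivAt (fun x : ℝ => x * Real.cosh x - Real.sinh x)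
          (1 * Real.cosh x + x * Real.sinh x - Real.cosh x) x :=
        ((hasDerivAt_id x).mul (Real.hasDerivAt_cosh x)).sub (Real.hasDerivAt_sinh x)
      rw [hd.deriv]
      have : 0 ≤ x * Real.sinh x :=
        mul_nonneg (le_of_lt hx) (Real.sinh_nonneg_iff.mpr (le_of_lt hx))
      nlinarith
  have := h (Set.self_mem_Ici) ht ht
  simp at this
  linarith

lemma cosh_one_lt_two : Real.cosh 1 < 2 := by
  rw [Real.cosh_eq]
  have h1 : Real.exp 1 < 2.7182818286 := Real.exp_one_lt_d9
  have h2 : Real.exp (-1) < 1 := by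
    rw [Real.exp_lt_one_iff]; norm_num
  norm_num
  linarith

lemma cosh_le_one_add_sq {t : ℝ} (ht0 : 0 ≤ t) (ht1 : t ≤ 1) : Real.cosh t ≤ 1 + t ^ 2 := by
  have h : MonotoneOn (fun x : ℝ => 1 + x ^ 2 - Real.cosh x) (Set.Icc 0 1) := by
    apply monotoneOn_of_deriv_nonneg (convex_Icc 0 1)
    · fun_prop
    · intro x hx
      exact (((differentiable_const (1:ℝ)).add (differentiable_pow 2)).sub
        Real.differentiable_cosh).differentiableAt.differentiableWithinAt
    · intro x hx
      rw [interior_Icc] at hx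
      have hd : HasDerivAt (fun x : ℝ => 1 + x ^ 2 - Real.cosh x)
          (0 + 2 * x - Real.sinh x) x := by
        have := ((hasDerivAt_const x (1:ℝ)).add (hasDerivAt_pow 2 x)).sub
          (Real.hasDerivAt_cosh x)
        exact this.congr_deriv (by norm_num)
      rw [hd.deriv]
      have h1 : Real.sinh x ≤ x * Real.cosh x := sinh_le_mul_cosh hx.1.le
      have h2 : Real.cosh x ≤ Real.cosh 1 := by
        rw [Real.cosh_le_cosh]
        rw [abs_of_nonneg hx.1.le, abs_one]
        exact hx.2.le
      have h3 := cosh_one_lt_two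
      nlinarith [hx.1.le]
  have := h (Set.left_mem_Icc.mpr zero_le_one) ⟨ht0, ht1⟩ ht0
  simp at this
  linarith

lemma one_sub_exp_le {x : ℝ} : 1 - Real.exp (-x) ≤ x := by
  have := Real.add_one_le_exp (-x); linarith

lemma one_sub_div_sinh_le {t : ℝ} (ht : 0 < t) (ht1 : t ≤ 1) :
    1 - t / Real.sinh t ≤ t ^ 2 := by
  have hts : t ≤ Real.sinh t := (Real.self_le_sinh_iff).mpr ht.le
  have hsp : 0 < Real.sinh t := lt_of_lt_of_le ht hts
  have h1 : Real.sinh t - t ≤ t ^ 3 := by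
    have h2 := sinh_le_mul_cosh ht.le
    have h3 := cosh_le_one_add_sq ht.le ht1
    nlinarith
  have h2 : (Real.sinh t - t) / Real.sinh t ≤ t ^ 3 / t :=
    div_le_div₀ (by positivity) h1 ht hts
  have h3 : t ^ 3 / t = t ^ 2 := by
    field_simp
  have h4 : 1 - t / Real.sinh t = (Real.sinh t - t) / Real.sinh t := by
    field_simp
  rw [h4]; rw [h3] at h2; exact h2

-- rpow helper: sinh t ^ p = t ^ p * (t / sinh t) ^ (-p)
lemma sinh_rpow_eq {t : ℝ} (ht : 0 < t) (p : ℝ) :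
    Real.sinh t ^ p = t ^ p * (t / Real.sinh t) ^ (-p) := by
  have hsp : 0 < Real.sinh t := Real.sinh_pos_iff.mpr ht
  have hr : (0:ℝ) < t / Real.sinh t := by positivity
  have htp : (0:ℝ) < t ^ p := Real.rpow_pos_of_pos ht p
  rw [Real.rpow_neg hr.le, Real.div_rpow ht.le hsp.le, inv_div]
  field_simp

lemma g_bound {s μ t : ℝ} (hs0 : 0 < s) (hs1 : s < 1) (hμ : 0 < μ)
    (ht : 0 < t) (ht1 : t ≤ 1) :
    |t ^ (s - 2) - Real.exp (-μ * t) * Real.cosh t * Real.sinh t ^ (s - 2)|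
      ≤ (μ + 3) * t ^ (s - 1) := by
  have hts : t ≤ Real.sinh t := (Real.self_le_sinh_iff).mpr ht.le
  have hsp : 0 < Real.sinh t := Real.sinh_pos_iff.mpr ht
  set r : ℝ := t / Real.sinh t with hrdef
  have hr0 : 0 < r := by positivity
  have hr1 : r ≤ 1 := div_le_one_of_le₀ hts hsp.le
  have h1mr : 1 - r ≤ t ^ 2 := one_sub_div_sinh_le ht ht1
  set A : ℝ := t ^ (s - 2) with hAdef
  have hA : 0 < A := Real.rpow_pos_of_pos ht _
  set E : ℝ := Real.exp (-μ * t) with hEdef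
  have hE0 : 0 < E := Real.exp_pos _
  have hE1 : E ≤ 1 := by
    rw [hEdef, Real.exp_le_one_iff]; nlinarith
  have hEμ : 1 - E ≤ μ * t := by
    have := one_sub_exp_le (x := μ * t)
    rw [hEdef, neg_mul]; exact this
  set C : ℝ := Real.cosh t with hCdef
  have hC1 : 1 ≤ C := Real.one_le_cosh t
  have hC2 : C - 1 ≤ t ^ 2 := by
    have := cosh_le_one_add_sq ht.le ht1; rw [hCdef]; linarith
  set B : ℝ := Real.sinh t ^ (s - 2) with hBdef
  have hBA : B = A * r ^ (2 - s) := by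
    rw [hBdef, hAdef, hrdef, sinh_rpow_eq ht]
    norm_num
  have hrp1 : r ^ (2 - s) ≤ 1 :=
    Real.rpow_le_one hr0.le hr1 (by linarith)
  have hrplb : 1 - r ^ (2 - s) ≤ 2 * (1 - r) := by
    have hb := one_add_mul_self_le_rpow_one_add (s := r - 1) (by linarith) (p := 2 - s)
      (by linarith)
    have : (1 + (r - 1)) = r := by ring
    rw [this] at hb
    nlinarith
  have hB0 : 0 < B := Real.rpow_pos_of_pos hsp _
  have hBleA : B ≤ A := by
    rw [hBA]
    exact mul_le_of_le_one_right hA.le hrp1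
  -- decomposition
  have hdec : A - E * C * B = (1 - E) * A + E * (A - B) - E * B * (C - 1) := by ring
  have hAt2 : A * t ^ 2 = t ^ s := by
    have : (t:ℝ) ^ 2 = t ^ (2:ℝ) := by
      rw [← Real.rpow_natCast t 2]; norm_num
    rw [hAdef, this, ← Real.rpow_add ht]; congr 1; ring
  have hAt1 : A * t = t ^ (s - 1) := by
    have : (t:ℝ) = t ^ (1:ℝ) := (Real.rpow_one t).symm
    nth_rewrite 1 [this]
    rw [hAdef, ← Real.rpow_add ht]; congr 1; ring
  have hts1 : t ^ s ≤ t ^ (s - 1) :=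
    Real.rpow_le_rpow_of_exponent_ge ht ht1 (by linarith)
  have hABnn : 0 ≤ A - B := by linarith
  have h1 : (1 - E) * A ≤ μ * t ^ (s - 1) := by
    calc (1 - E) * A ≤ (μ * t) * A :=
          mul_le_mul_of_nonneg_right hEμ hA.le
    _ = μ * (A * t) := by ring
    _ = μ * t ^ (s - 1) := by rw [hAt1]
  have h2' : E * (A - B) ≤ 2 * t ^ s := by
    have h2 : A - B ≤ 2 * t ^ s := by
      have heq : A - B = A * (1 - r ^ (2 - s)) := by rw [hBA]; ring
      rw [heq]
      calc A * (1 - r ^ (2 - s)) ≤ A * (2 * (1 - r)) :=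
            mul_le_mul_of_nonneg_left hrplb hA.le
      _ ≤ A * (2 * t ^ 2) := mul_le_mul_of_nonneg_left (by linarith) hA.le
      _ = 2 * (A * t ^ 2) := by ring
      _ = 2 * t ^ s := by rw [hAt2]
    calc E * (A - B) ≤ A - B := mul_le_of_le_one_left hABnn hE1
    _ ≤ 2 * t ^ s := h2
  have h3 : E * B * (C - 1) ≤ t ^ s := by
    have hEB : E * B ≤ A := by
      calc E * B ≤ 1 * A := mul_le_mul hE1 hBleA hB0.le zero_le_one
      _ = A := one_mul A
    calc E * B * (C - 1) ≤ A * (C - 1) :=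
          mul_le_mul_of_nonneg_right hEB (by linarith)
    _ ≤ A * t ^ 2 := mul_le_mul_of_nonneg_left hC2 hA.le
    _ = t ^ s := hAt2
  have hnn2 : 0 ≤ E * (A - B) := mul_nonneg hE0.le hABnn
  have hnn1 : 0 ≤ (1 - E) * A := mul_nonneg (by linarith) hA.le
  have hnn3 : 0 ≤ E * B * (C - 1) := mul_nonneg (mul_nonneg hE0.le hB0.le) (by linarith)
  have hP : (0:ℝ) < t ^ (s - 1) := Real.rpow_pos_of_pos ht _
  have hPs : (0:ℝ) < t ^ s := Real.rpow_pos_of_pos ht _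
  rw [hdec, abs_le]
  constructor
  · linarith
  · linarith

lemma F_bound {s μ t : ℝ} (hs0 : 0 < s) (hs1 : s < 1) (hμ : 0 < μ)
    (ht : 0 < t) (ht1 : t ≤ 1) :
    |Real.exp (-μ * t) * Real.sinh t ^ (s - 1) - t ^ (s - 1)| ≤ (1 + μ) * t ^ s := by
  have hts : t ≤ Real.sinh t := (Real.self_le_sinh_iff).mpr ht.le
  have hsp : 0 < Real.sinh t := Real.sinh_pos_iff.mpr ht
  set r : ℝ := t / Real.sinh t with hrdef
  have hr0 : 0 < r := by positivity
  have hr1 : r ≤ 1 := div_le_one_of_le₀ hts hsp.le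
  have h1mr : 1 - r ≤ t ^ 2 := one_sub_div_sinh_le ht ht1
  set A : ℝ := t ^ (s - 1) with hAdef
  have hA : 0 < A := Real.rpow_pos_of_pos ht _
  set E : ℝ := Real.exp (-μ * t) with hEdef
  have hE0 : 0 < E := Real.exp_pos _
  have hE1 : E ≤ 1 := by rw [hEdef, Real.exp_le_one_iff]; nlinarith
  have hEμ : 1 - E ≤ μ * t := by
    have := one_sub_exp_le (x := μ * t)
    rw [hEdef, neg_mul]; exact this
  set B : ℝ := Real.sinh t ^ (s - 1) with hBdef
  have hBA : B = A * r ^ (1 - s) := by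
    rw [hBdef, hAdef, hrdef, sinh_rpow_eq ht]; norm_num
  have hrp1 : r ^ (1 - s) ≤ 1 := Real.rpow_le_one hr0.le hr1 (by linarith)
  have hrge : r ≤ r ^ (1 - s) := by
    have := Real.rpow_le_rpow_of_exponent_ge hr0 hr1 (by linarith : 1 - s ≤ 1)
    rwa [Real.rpow_one] at this
  have hB0 : 0 < B := Real.rpow_pos_of_pos hsp _
  have hBleA : B ≤ A := by
    rw [hBA]; exact mul_le_of_le_one_right hA.le hrp1
  have hdec : E * B - A = E * (B - A) + (E - 1) * A := by ring
  have hAt2 : A * t ^ 2 = t ^ (s + 1) := by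
    have : (t:ℝ) ^ 2 = t ^ (2:ℝ) := by rw [← Real.rpow_natCast t 2]; norm_num
    rw [hAdef, this, ← Real.rpow_add ht]; congr 1; ring
  have hAt1 : A * t = t ^ s := by
    have : (t:ℝ) = t ^ (1:ℝ) := (Real.rpow_one t).symm
    nth_rewrite 1 [this]
    rw [hAdef, ← Real.rpow_add ht]; congr 1; ring
  have hts1 : t ^ (s + 1) ≤ t ^ s :=
    Real.rpow_le_rpow_of_exponent_ge ht ht1 (by linarith)
  have hBAnn : 0 ≤ A - B := by linarith
  have h1 : A - B ≤ t ^ s := by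
    have heq : A - B = A * (1 - r ^ (1 - s)) := by rw [hBA]; ring
    rw [heq]
    calc A * (1 - r ^ (1 - s)) ≤ A * (1 - r) :=
          mul_le_mul_of_nonneg_left (by linarith) hA.le
    _ ≤ A * t ^ 2 := mul_le_mul_of_nonneg_left h1mr hA.le
    _ = t ^ (s + 1) := hAt2
    _ ≤ t ^ s := hts1
  have h2 : (1 - E) * A ≤ μ * t ^ s := by
    calc (1 - E) * A ≤ (μ * t) * A := mul_le_mul_of_nonneg_right hEμ hA.le
    _ = μ * (A * t) := by ring
    _ = μ * t ^ s := by rw [hAt1]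
  have h1' : -(t ^ s) ≤ E * (B - A) := by
    have : E * (A - B) ≤ A - B := mul_le_of_le_one_left hBAnn hE1
    have h1'' : E * (A - B) ≤ t ^ s := this.trans h1
    nlinarith
  have h2' : (E - 1) * A ≤ 0 := mul_nonpos_of_nonpos_of_nonneg (by linarith) hA.le
  have h2'' : -(μ * t ^ s) ≤ (E - 1) * A := by nlinarith
  have hnnEBA : E * (B - A) ≤ 0 := by nlinarith
  have hPs : (0:ℝ) < t ^ s := Real.rpow_pos_of_pos ht _
  rw [hdec, abs_le]
  constructor
  · linarith
  · linarith

lemma one_le_sinh_one : (1:ℝ) ≤ Real.sinh 1 := by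
  rw [Real.sinh_eq]
  have h1 : (2.7182818283:ℝ) < Real.exp 1 := Real.exp_one_gt_d9
  have hmul : Real.exp (-1) * Real.exp 1 = 1 := by
    rw [← Real.exp_add]; norm_num
  have hp := Real.exp_pos (-1)
  norm_num
  nlinarith

lemma exp_div_four_le_sinh {t : ℝ} (ht : 1 ≤ t) : Real.exp t / 4 ≤ Real.sinh t := by
  rw [Real.sinh_eq]
  have h1 : Real.exp (-t) ≤ Real.exp t * Real.exp (-2) := by
    rw [← Real.exp_add]
    exact Real.exp_le_exp.mpr (by linarith)
  have h2 : Real.exp (-2) ≤ 1/2 := by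
    have hmul : Real.exp (-2) * Real.exp 2 = 1 := by
      rw [← Real.exp_add]; norm_num
    have h12 : Real.exp 1 ≤ Real.exp 2 := Real.exp_le_exp.mpr (by norm_num)
    have h1' : (2.7182818283:ℝ) < Real.exp 1 := Real.exp_one_gt_d9
    have hp := Real.exp_pos (-2)
    nlinarith
  have hp := Real.exp_pos t
  nlinarith

lemma decay_bound {s μ t : ℝ} (hs0 : 0 < s) (hs1 : s < 1) (ht : 1 ≤ t) :
    Real.exp (-μ * t) * Real.cosh t * Real.sinh t ^ (s - 2)
      ≤ 16 * Real.exp ((s - 1 - μ) * t) := by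
  have htp : (0:ℝ) < t := by linarith
  have hsinh : Real.exp t / 4 ≤ Real.sinh t := exp_div_four_le_sinh ht
  have hq : (0:ℝ) < Real.exp t / 4 := by positivity
  have h1 : Real.sinh t ^ (s - 2) ≤ (Real.exp t / 4) ^ (s - 2) :=
    Real.rpow_le_rpow_of_nonpos hq hsinh (by linarith)
  have h2 : (Real.exp t / 4) ^ (s - 2) = Real.exp ((s-2) * t) * (4:ℝ) ^ (2 - s) := by
    rw [Real.div_rpow (Real.exp_pos t).le (by norm_num)]
    rw [← Real.exp_mul, mul_comm t (s-2)]
    rw [div_eq_mul_inv, ← Real.rpow_neg (by norm_num : (0:ℝ) ≤ 4)]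
    congr 1
    ring
  have h3 : (4:ℝ) ^ (2 - s) ≤ 16 := by
    calc (4:ℝ) ^ (2 - s) ≤ (4:ℝ) ^ (2:ℝ) :=
          Real.rpow_le_rpow_of_exponent_le (by norm_num) (by linarith)
    _ = 16 := by
      rw [show (2:ℝ) = ((2:ℕ):ℝ) by norm_num, Real.rpow_natCast]; norm_num
  have hcosh : Real.cosh t ≤ Real.exp t := by
    rw [Real.cosh_eq]
    have := Real.exp_pos (-t)
    have : Real.exp (-t) ≤ Real.exp t := Real.exp_le_exp.mpr (by linarith)
    linarith [Real.exp_pos (-t)]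
  have hE : (0:ℝ) < Real.exp (-μ * t) := Real.exp_pos _
  have hC : (0:ℝ) < Real.cosh t := Real.cosh_pos t
  have hS : (0:ℝ) < Real.sinh t ^ (s-2) := Real.rpow_pos_of_pos (Real.sinh_pos_iff.mpr htp) _
  calc Real.exp (-μ * t) * Real.cosh t * Real.sinh t ^ (s - 2)
      ≤ Real.exp (-μ * t) * Real.exp t * (Real.exp ((s-2)*t) * 16) := by
        apply mul_le_mul
        · exact mul_le_mul_of_nonneg_left hcosh hE.le
        · calc Real.sinh t ^ (s-2) ≤ (Real.exp t / 4) ^ (s - 2) := h1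
          _ = Real.exp ((s-2) * t) * (4:ℝ) ^ (2 - s) := h2
          _ ≤ Real.exp ((s-2) * t) * 16 := by
              exact mul_le_mul_of_nonneg_left h3 (Real.exp_pos _).le
        · exact hS.le
        · positivity
    _ = 16 * Real.exp ((s - 1 - μ) * t) := by
        rw [← Real.exp_add, ← mul_assoc, ← Real.exp_add,
          show -μ * t + t + (s-2)*t = (s - 1 - μ) * t by ring]
        ring

section
variable {s μ : ℝ}

lemma contOn_G : ContinuousOn (fun t : ℝ => Real.exp (-μ * t) * Real.sinh t ^ (s - 1))
    (Set.Ioi 0) := by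
  intro x hx
  have hx0 : (0:ℝ) < x := hx
  apply ContinuousAt.continuousWithinAt
  exact ((Real.continuous_exp.comp (continuous_const.mul continuous_id)).continuousAt).mul
    ((Real.continuous_sinh.continuousAt).rpow_const (Or.inl (Real.sinh_ne_zero.mpr hx0.ne')))

lemma contOn_g : ContinuousOn (fun t : ℝ =>
    t ^ (s - 2) - Real.exp (-μ * t) * Real.cosh t * Real.sinh t ^ (s - 2))
    (Set.Ioi 0) := by
  intro x hx
  have hx0 : (0:ℝ) < x := hx
  apply ContinuousAt.continuousWithinAt
  apply ContinuousAt.sub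
  · exact Real.continuousAt_rpow_const x _ (Or.inl hx0.ne')
  · exact (((Real.continuous_exp.comp (continuous_const.mul continuous_id)).continuousAt).mul
      Real.continuous_cosh.continuousAt).mul
      ((Real.continuous_sinh.continuousAt).rpow_const (Or.inl (Real.sinh_ne_zero.mpr hx0.ne')))

lemma sinh_rpow_le_rpow {t p : ℝ} (ht : 0 < t) (hp : p ≤ 0) :
    Real.sinh t ^ p ≤ t ^ p :=
  Real.rpow_le_rpow_of_nonpos ht ((Real.self_le_sinh_iff).mpr ht.le) hp

lemma integrableOn_G (hs0 : 0 < s) (hs1 : s < 1) (hμ : 0 < μ) :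
    IntegrableOn (fun t : ℝ => Real.exp (-μ * t) * Real.sinh t ^ (s - 1))
      (Set.Ioi 0) volume := by
  rw [show Set.Ioi (0:ℝ) = Set.Ioc 0 1 ∪ Set.Ioi 1 from
    (Set.Ioc_union_Ioi_eq_Ioi zero_le_one).symm]
  apply IntegrableOn.union
  · -- majorant t ^ (s-1)
    have hmaj : IntegrableOn (fun t : ℝ => t ^ (s - 1)) (Set.Ioc (0:ℝ) 1) volume := by
      rw [← intervalIntegrable_iff_integrableOn_Ioc_of_le zero_le_one]
      exact intervalIntegral.intervalIntegrable_rpow' (by linarith)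
    apply Integrable.mono' hmaj
    · exact (contOn_G.mono (Set.Ioc_subset_Ioi_self)).aestronglyMeasurable measurableSet_Ioc
    · rw [ae_restrict_iff' measurableSet_Ioc]
      filter_upwards with t ht'
      obtain ⟨ht0, ht1⟩ := ht'
      have h1 : Real.exp (-μ * t) ≤ 1 := by
        rw [Real.exp_le_one_iff]; nlinarith
      have h2 : Real.sinh t ^ (s - 1) ≤ t ^ (s - 1) := sinh_rpow_le_rpow ht0 (by linarith)
      have h3 : (0:ℝ) < Real.sinh t ^ (s - 1) :=
        Real.rpow_pos_of_pos (Real.sinh_pos_iff.mpr ht0) _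
      rw [Real.norm_eq_abs, abs_of_nonneg (by positivity)]
      calc Real.exp (-μ * t) * Real.sinh t ^ (s - 1) ≤ 1 * (t ^ (s-1)) := by
            apply mul_le_mul h1 h2 h3.le zero_le_one
      _ = t ^ (s - 1) := one_mul _
  · -- majorant exp (-μ t)
    have hmaj : IntegrableOn (fun t : ℝ => Real.exp (-μ * t)) (Set.Ioi (1:ℝ)) volume :=
      exp_neg_integrableOn_Ioi 1 hμ
    apply Integrable.mono' hmaj
    · exact (contOn_G.mono (fun x (hx : x ∈ Set.Ioi (1:ℝ)) => Set.mem_Ioi.mpr (lt_trans zero_lt_one (Set.mem_Ioi.mp hx)))).aestronglyMeasurable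
        measurableSet_Ioi
    · rw [ae_restrict_iff' measurableSet_Ioi]
      filter_upwards with t ht'
      have ht1 : (1:ℝ) ≤ t := le_of_lt ht'
      have ht0 : (0:ℝ) < t := lt_of_lt_of_le zero_lt_one ht1
      have hsinh1 : (1:ℝ) ≤ Real.sinh t :=
        le_trans one_le_sinh_one (by rw [Real.sinh_le_sinh]; exact ht1)
      have h2 : Real.sinh t ^ (s - 1) ≤ 1 :=
        Real.rpow_le_one_of_one_le_of_nonpos hsinh1 (by linarith)
      have h3 : (0:ℝ) < Real.sinh t ^ (s - 1) :=
        Real.rpow_pos_of_pos (Real.sinh_pos_iff.mpr ht0) _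
      rw [Real.norm_eq_abs, abs_of_nonneg (by positivity)]
      calc Real.exp (-μ * t) * Real.sinh t ^ (s - 1) ≤ Real.exp (-μ*t) * 1 :=
            mul_le_mul_of_nonneg_left h2 (Real.exp_pos _).le
      _ = Real.exp (-μ * t) := mul_one _

lemma integrableOn_g (hs0 : 0 < s) (hs1 : s < 1) (hμ : 0 < μ) :
    IntegrableOn (fun t : ℝ =>
      t ^ (s - 2) - Real.exp (-μ * t) * Real.cosh t * Real.sinh t ^ (s - 2))
      (Set.Ioi 0) volume := by
  rw [show Set.Ioi (0:ℝ) = Set.Ioc 0 1 ∪ Set.Ioi 1 from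
    (Set.Ioc_union_Ioi_eq_Ioi zero_le_one).symm]
  apply IntegrableOn.union
  · have hmaj : IntegrableOn (fun t : ℝ => (μ + 3) * t ^ (s - 1)) (Set.Ioc (0:ℝ) 1) volume := by
      have h0 : IntegrableOn (fun t : ℝ => t ^ (s - 1)) (Set.Ioc (0:ℝ) 1) volume := by
        rw [← intervalIntegrable_iff_integrableOn_Ioc_of_le zero_le_one]
        exact intervalIntegral.intervalIntegrable_rpow' (by linarith)
      exact h0.const_mul _
    apply Integrable.mono' hmaj
    · exact (contOn_g.mono (Set.Ioc_subset_Ioi_self)).aestronglyMeasurable measurableSet_Ioc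
    · rw [ae_restrict_iff' measurableSet_Ioc]
      filter_upwards with t ht'
      exact g_bound hs0 hs1 hμ ht'.1 ht'.2
  · have hmaj : IntegrableOn
        (fun t : ℝ => t ^ (s - 2) + 16 * Real.exp (-(μ + 1 - s) * t)) (Set.Ioi (1:ℝ)) volume := by
      apply Integrable.add
      · exact integrableOn_Ioi_rpow_of_lt (by linarith) zero_lt_one
      · exact (exp_neg_integrableOn_Ioi 1 (by linarith)).const_mul 16
    apply Integrable.mono' hmaj
    · exact (contOn_g.mono (fun x (hx : x ∈ Set.Ioi (1:ℝ)) => Set.mem_Ioi.mpr (lt_trans zero_lt_one (Set.mem_Ioi.mp hx)))).aestronglyMeasurable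
        measurableSet_Ioi
    · rw [ae_restrict_iff' measurableSet_Ioi]
      filter_upwards with t ht'
      have ht1 : (1:ℝ) ≤ t := le_of_lt ht'
      have ht0 : (0:ℝ) < t := lt_of_lt_of_le zero_lt_one ht1
      have hP : (0:ℝ) < t ^ (s - 2) := Real.rpow_pos_of_pos ht0 _
      have hQ : (0:ℝ) < Real.exp (-μ * t) * Real.cosh t * Real.sinh t ^ (s - 2) := by
        have := Real.rpow_pos_of_pos (Real.sinh_pos_iff.mpr ht0) (s-2)
        have := Real.cosh_pos t
        positivity
      have hd := decay_bound (μ := μ) hs0 hs1 ht1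
      rw [Real.norm_eq_abs]
      calc |t ^ (s - 2) - Real.exp (-μ * t) * Real.cosh t * Real.sinh t ^ (s - 2)|
          ≤ t ^ (s - 2) + 16 * Real.exp ((s - 1 - μ) * t) := by
            rw [abs_sub_le_iff]
            constructor <;> nlinarith
      _ = t ^ (s - 2) + 16 * Real.exp (-(μ + 1 - s) * t) := by ring_nf
end

section
variable {s μ : ℝ}

lemma hasDeriv_F (hs0 : 0 < s) (hs1 : s < 1) {x : ℝ} (hx : 0 < x) :
    HasDerivAt (fun t : ℝ => Real.exp (-μ * t) * Real.sinh t ^ (s - 1) - t ^ (s - 1))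
      ((1 - s) * (x ^ (s - 2) - Real.exp (-μ * x) * Real.cosh x * Real.sinh x ^ (s - 2))
        - μ * (Real.exp (-μ * x) * Real.sinh x ^ (s - 1))) x := by
  have hsinh0 : Real.sinh x ≠ 0 := Real.sinh_ne_zero.mpr hx.ne'
  have hexp : HasDerivAt (fun t : ℝ => Real.exp (-μ * t)) (Real.exp (-μ * x) * (-μ * 1)) x :=
    ((hasDerivAt_id x).const_mul (-μ)).exp
  have hpow : HasDerivAt (fun t : ℝ => Real.sinh t ^ (s - 1))
      (Real.cosh x * (s - 1) * Real.sinh x ^ (s - 1 - 1)) x :=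
    (Real.hasDerivAt_sinh x).rpow_const (Or.inl hsinh0)
  have hxpow : HasDerivAt (fun t : ℝ => t ^ (s - 1)) ((s - 1) * x ^ (s - 1 - 1)) x :=
    Real.hasDerivAt_rpow_const (Or.inl hx.ne')
  have h := (hexp.mul hpow).sub hxpow
  refine h.congr_deriv ?_
  rw [show s - 1 - 1 = s - 2 by ring]
  ring

lemma tendstoF_top (hs1 : s < 1) (hμ : 0 < μ) :
    Tendsto (fun t : ℝ => Real.exp (-μ * t) * Real.sinh t ^ (s - 1) - t ^ (s - 1))
      atTop (𝓝 0) := by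
  rw [show (0:ℝ) = 0 - 0 by norm_num]
  apply Tendsto.sub
  · -- squeeze by exp(-μ t)
    apply squeeze_zero_norm' (a := fun t : ℝ => Real.exp (-μ * t))
    · filter_upwards [eventually_ge_atTop (1:ℝ)] with t ht1
      have ht0 : (0:ℝ) < t := lt_of_lt_of_le zero_lt_one ht1
      have hsinh1 : (1:ℝ) ≤ Real.sinh t :=
        le_trans one_le_sinh_one (by rw [Real.sinh_le_sinh]; exact ht1)
      have h2 : Real.sinh t ^ (s - 1) ≤ 1 :=
        Real.rpow_le_one_of_one_le_of_nonpos hsinh1 (by linarith)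
      have h3 : (0:ℝ) < Real.sinh t ^ (s - 1) :=
        Real.rpow_pos_of_pos (Real.sinh_pos_iff.mpr ht0) _
      rw [Real.norm_eq_abs, abs_of_nonneg (by positivity)]
      calc Real.exp (-μ * t) * Real.sinh t ^ (s - 1) ≤ Real.exp (-μ * t) * 1 :=
            mul_le_mul_of_nonneg_left h2 (Real.exp_pos _).le
      _ = Real.exp (-μ * t) := mul_one _
    · have hmt : Tendsto (fun t : ℝ => μ * t) atTop atTop :=
        Tendsto.const_mul_atTop hμ tendsto_id
      have h := Real.tendsto_exp_neg_atTop_nhds_zero.comp hmt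
      have : ((fun x : ℝ => Real.exp (-x)) ∘ fun t : ℝ => μ * t)
          = fun t : ℝ => Real.exp (-μ * t) := by
        funext t; simp [Function.comp, neg_mul]
      rwa [this] at h
  · have h := tendsto_rpow_neg_atTop (y := 1 - s) (by linarith)
    simpa [show -(1-s) = s - 1 by ring] using h

lemma contWithinF (hs0 : 0 < s) (hs1 : s < 1) (hμ : 0 < μ) :
    ContinuousWithinAt
      (fun t : ℝ => Real.exp (-μ * t) * Real.sinh t ^ (s - 1) - t ^ (s - 1))
      (Set.Ici 0) 0 := by
  have hF0 : (fun t : ℝ => Real.exp (-μ * t) * Real.sinh t ^ (s - 1) - t ^ (s - 1)) 0 = 0 := by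
    show Real.exp (-μ * 0) * Real.sinh 0 ^ (s - 1) - (0:ℝ) ^ (s - 1) = 0
    rw [Real.sinh_zero, Real.zero_rpow (by linarith : s - 1 ≠ 0)]
    simp
  unfold ContinuousWithinAt
  rw [hF0]
  apply squeeze_zero_norm' (a := fun t : ℝ => (1 + μ) * t ^ s)
  · have h1 : ∀ᶠ t in 𝓝[Set.Ici (0:ℝ)] 0, t ∈ Set.Ici (0:ℝ) := self_mem_nhdsWithin
    have h2 : ∀ᶠ t in 𝓝[Set.Ici (0:ℝ)] 0, |t| < 1 := by
      apply eventually_nhdsWithin_of_eventually_nhds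
      have : Tendsto (fun t : ℝ => |t|) (𝓝 0) (𝓝 0) := by
        simpa using continuous_abs.tendsto (0:ℝ)
      exact this.eventually_lt_const zero_lt_one
    filter_upwards [h1, h2] with t ht habs
    rcases eq_or_lt_of_le (Set.mem_Ici.mp ht) with h | h
    · rw [← h]
      rw [Real.sinh_zero, Real.zero_rpow (by linarith : s - 1 ≠ 0),
        Real.zero_rpow hs0.ne']
      simp
    · have ht1 : t ≤ 1 := by
        rw [abs_of_pos h] at habs; exact habs.le
      rw [Real.norm_eq_abs]
      exact F_bound hs0 hs1 hμ h ht1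
  · have hc : ContinuousAt (fun t : ℝ => t ^ s) 0 :=
      Real.continuousAt_rpow_const 0 s (Or.inr hs0.le)
    have hc2 : ContinuousAt (fun t : ℝ => (1 + μ) * t ^ s) 0 := hc.const_mul _
    have hval : (1 + μ) * (0:ℝ) ^ s = 0 := by
      rw [Real.zero_rpow hs0.ne']; ring
    have h := hc2.tendsto.mono_left (nhdsWithin_le_nhds (s := Set.Ici (0:ℝ)))
    show Tendsto (fun t : ℝ => (1 + μ) * t ^ s) (𝓝[Set.Ici (0:ℝ)] 0) (𝓝 0)
    rwa [hval] at h
end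

lemma real_beta {a b : ℝ} (ha : 0 < a) (hb : 0 < b) :
    ∫ x in (0:ℝ)..1, x ^ (a - 1) * (1 - x) ^ (b - 1)
      = Real.Gamma a * Real.Gamma b / Real.Gamma (a + b) := by
  have hab : 0 < Real.Gamma (a + b) := Real.Gamma_pos_of_pos (by linarith)
  have hc := Complex.Gamma_mul_Gamma_eq_betaIntegral (s := (a:ℂ)) (t := (b:ℂ))
    (by simpa using ha) (by simpa using hb)
  have hbeta : Complex.betaIntegral (a:ℂ) (b:ℂ)
      = ((∫ x in (0:ℝ)..1, x ^ (a - 1) * (1 - x) ^ (b - 1) : ℝ) : ℂ) := by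
    rw [Complex.betaIntegral, ← intervalIntegral.integral_ofReal]
    apply intervalIntegral.integral_congr
    intro x hx
    rw [Set.uIcc_of_le zero_le_one] at hx
    have hx0 : (0:ℝ) ≤ x := hx.1
    have hx1 : (0:ℝ) ≤ 1 - x := by linarith [hx.2]
    push_cast
    rw [Complex.ofReal_cpow hx0, Complex.ofReal_cpow hx1]
    push_cast
    ring
  rw [hbeta] at hc
  have hcast : (a:ℂ) + (b:ℂ) = ((a + b : ℝ) : ℂ) := by push_cast; ring
  rw [hcast, Complex.Gamma_ofReal, Complex.Gamma_ofReal, Complex.Gamma_ofReal] at hc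
  have hreal : Real.Gamma a * Real.Gamma b
      = Real.Gamma (a + b) * ∫ x in (0:ℝ)..1, x ^ (a - 1) * (1 - x) ^ (b - 1) := by
    exact_mod_cast hc
  rw [eq_div_iff hab.ne']
  linarith [hreal]

section
variable {s μ : ℝ}

lemma image_exp_neg_two : (fun t : ℝ => Real.exp (-2 * t)) '' (Set.Ioi 0) = Set.Ioo 0 1 := by
  ext x
  constructor
  · rintro ⟨t, ht, rfl⟩
    have ht0 : (0:ℝ) < t := ht
    constructor
    · exact Real.exp_pos _
    · rw [Real.exp_lt_one_iff]; nlinarith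
  · rintro ⟨hx0, hx1⟩
    refine ⟨Real.log x / (-2), ?_, ?_⟩
    · have : Real.log x < 0 := Real.log_neg hx0 hx1
      show (0:ℝ) < Real.log x / (-2)
      rw [div_neg, lt_neg, neg_zero]
      exact div_neg_of_neg_of_pos this (by norm_num)
    · show Real.exp (-2 * (Real.log x / (-2))) = x
      rw [show -2 * (Real.log x / (-2)) = Real.log x by ring]
      exact Real.exp_log hx0

lemma G_integral (hs0 : 0 < s) (hs1 : s < 1) (hμ : 0 < μ) :
    ∫ t in Set.Ioi (0:ℝ), Real.exp (-μ * t) * Real.sinh t ^ (s - 1)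
      = (2:ℝ) ^ (-s) * (Real.Gamma ((μ + 1 - s)/2) * Real.Gamma s
          / Real.Gamma ((μ + 1 - s)/2 + s)) := by
  set a : ℝ := (μ + 1 - s)/2 with hadef
  have ha : 0 < a := by rw [hadef]; linarith
  -- substitution
  have hderiv : ∀ x ∈ Set.Ioi (0:ℝ), HasDerivWithinAt (fun t : ℝ => Real.exp (-2 * t))
      (-2 * Real.exp (-2 * x)) (Set.Ioi 0) x := by
    intro x hx
    have h : HasDerivAt (fun t : ℝ => Real.exp (-2 * t)) (Real.exp (-2 * x) * (-2 * 1)) x :=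
      ((hasDerivAt_id x).const_mul (-2)).exp
    have h2 : HasDerivAt (fun t : ℝ => Real.exp (-2 * t)) (-2 * Real.exp (-2 * x)) x := by
      convert h using 1; ring
    exact h2.hasDerivWithinAt
  have hinj : Set.InjOn (fun t : ℝ => Real.exp (-2 * t)) (Set.Ioi 0) := by
    intro x _ y _ h
    have := Real.exp_eq_exp.mp h
    linarith
  have hsubst := integral_image_eq_integral_abs_deriv_smul measurableSet_Ioi hderiv hinj
    (fun x : ℝ => x ^ (a - 1) * (1 - x) ^ (s - 1))
  rw [image_exp_neg_two] at hsubst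
  -- pointwise equality of substituted integrand with 2^s * G
  have hpt : ∀ t ∈ Set.Ioi (0:ℝ),
      |(-2) * Real.exp (-2 * t)| • ((Real.exp (-2 * t)) ^ (a - 1)
          * (1 - Real.exp (-2 * t)) ^ (s - 1))
        = (2:ℝ) ^ s * (Real.exp (-μ * t) * Real.sinh t ^ (s - 1)) := by
    intro t ht
    have ht0 : (0:ℝ) < t := ht
    have hE2 : (0:ℝ) < Real.exp (-2 * t) := Real.exp_pos _
    have hE2lt : Real.exp (-2 * t) < 1 := by rw [Real.exp_lt_one_iff]; nlinarith
    have h1mE : (0:ℝ) < 1 - Real.exp (-2 * t) := by linarith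
    have habs : |(-2) * Real.exp (-2 * t)| = 2 * Real.exp (-2 * t) := by
      rw [abs_mul, abs_of_pos hE2]; norm_num
    -- sinh t = exp t * (1 - exp (-2 t)) / 2
    have hsinh : Real.sinh t = Real.exp t * (1 - Real.exp (-2 * t)) / 2 := by
      rw [Real.sinh_eq]
      have : Real.exp t * Real.exp (-2 * t) = Real.exp (-t) := by
        rw [← Real.exp_add]; congr 1; ring
      nlinarith [this]
    have hexp_rpow : ∀ x y : ℝ, Real.exp x ^ y = Real.exp (x * y) := fun x y =>
      (Real.exp_mul x y).symm
    have hsinh_rpow : Real.sinh t ^ (s - 1)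
        = Real.exp (t * (s - 1)) * (1 - Real.exp (-2 * t)) ^ (s - 1) * (2:ℝ) ^ (1 - s) := by
      rw [hsinh, div_rpow (by positivity) (by norm_num),
        Real.mul_rpow (Real.exp_pos t).le h1mE.le, hexp_rpow]
      rw [div_eq_mul_inv, ← Real.rpow_neg (by norm_num : (0:ℝ) ≤ 2)]
      congr 2
      ring
    rw [habs, smul_eq_mul, hexp_rpow, hsinh_rpow]
    rw [show -μ * t = -μ * t by rfl]
    have h2s : (2:ℝ) ^ s * (2:ℝ) ^ (1 - s) = 2 := by
      rw [← Real.rpow_add (by norm_num : (0:ℝ) < 2)]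
      norm_num
    -- combine exponentials
    have hcomb : 2 * Real.exp (-2 * t) * Real.exp (-2 * t * (a - 1))
        = 2 * Real.exp (-2 * a * t) := by
      rw [mul_assoc, ← Real.exp_add]
      congr 2
      ring
    have hcomb2 : Real.exp (-μ * t) * Real.exp (t * (s - 1)) = Real.exp (-2 * a * t) := by
      rw [← Real.exp_add]
      congr 1
      rw [hadef]; ring
    calc 2 * Real.exp (-2 * t) * (Real.exp (-2 * t * (a - 1))
          * (1 - Real.exp (-2 * t)) ^ (s - 1))
        = (2 * Real.exp (-2 * t) * Real.exp (-2 * t * (a - 1)))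
          * (1 - Real.exp (-2 * t)) ^ (s - 1) := by ring
      _ = 2 * Real.exp (-2 * a * t) * (1 - Real.exp (-2 * t)) ^ (s - 1) := by rw [hcomb]
      _ = (2:ℝ) ^ s * (Real.exp (-μ * t)
            * (Real.exp (t * (s - 1)) * (1 - Real.exp (-2 * t)) ^ (s - 1) * (2:ℝ) ^ (1 - s))) := by
          rw [show Real.exp (-μ * t) * (Real.exp (t * (s - 1))
              * (1 - Real.exp (-2 * t)) ^ (s - 1) * (2:ℝ) ^ (1 - s))
            = (Real.exp (-μ * t) * Real.exp (t * (s - 1)))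
              * (1 - Real.exp (-2 * t)) ^ (s - 1) * (2:ℝ) ^ (1 - s) by ring, hcomb2]
          rw [show (2:ℝ) ^ s * (Real.exp (-2 * a * t) * (1 - Real.exp (-2 * t)) ^ (s - 1)
              * (2:ℝ) ^ (1 - s))
            = ((2:ℝ) ^ s * (2:ℝ) ^ (1 - s)) * Real.exp (-2 * a * t)
              * (1 - Real.exp (-2 * t)) ^ (s - 1) by ring, h2s]
  -- now conclude
  have hIoo : ∫ x in Set.Ioo (0:ℝ) 1, x ^ (a - 1) * (1 - x) ^ (s - 1)
      = (2:ℝ) ^ s * ∫ t in Set.Ioi (0:ℝ), Real.exp (-μ * t) * Real.sinh t ^ (s - 1) := by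
    rw [hsubst, ← integral_const_mul]
    apply setIntegral_congr_fun measurableSet_Ioi
    intro t ht
    exact hpt t ht
  have hIoo2 : ∫ x in Set.Ioo (0:ℝ) 1, x ^ (a - 1) * (1 - x) ^ (s - 1)
      = Real.Gamma a * Real.Gamma s / Real.Gamma (a + s) := by
    rw [← integral_Ioc_eq_integral_Ioo, ← intervalIntegral.integral_of_le zero_le_one]
    exact real_beta ha hs0
  have h2spos : (0:ℝ) < (2:ℝ) ^ s := Real.rpow_pos_of_pos (by norm_num) s
  have := hIoo.symm.trans hIoo2
  rw [show (2:ℝ) ^ (-s) = ((2:ℝ) ^ s)⁻¹ by rw [Real.rpow_neg (by norm_num : (0:ℝ) ≤ 2)]]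
  field_simp at this ⊢
  linarith [this]
end

section
variable {s μ : ℝ}

lemma key_identity (hs0 : 0 < s) (hs1 : s < 1) (hμ : 0 < μ) :
    (1 - s) * ∫ t in Set.Ioi (0:ℝ),
        (t ^ (s - 2) - Real.exp (-μ * t) * Real.cosh t * Real.sinh t ^ (s - 2))
      = μ * ∫ t in Set.Ioi (0:ℝ), Real.exp (-μ * t) * Real.sinh t ^ (s - 1) := by
  have hg := integrableOn_g hs0 hs1 hμ
  have hG := integrableOn_G hs0 hs1 hμ
  have hφ : IntegrableOn (fun t : ℝ =>
      (1 - s) * (t ^ (s - 2) - Real.exp (-μ * t) * Real.cosh t * Real.sinh t ^ (s - 2))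
        - μ * (Real.exp (-μ * t) * Real.sinh t ^ (s - 1))) (Set.Ioi 0) volume :=
    (hg.const_mul (1 - s)).sub (hG.const_mul μ)
  have h0 := integral_Ioi_of_hasDerivAt_of_tendsto (contWithinF hs0 hs1 hμ)
    (fun x hx => hasDeriv_F hs0 hs1 hx) hφ (tendstoF_top hs1 hμ)
  have hF0 : Real.exp (-μ * 0) * Real.sinh 0 ^ (s - 1) - (0:ℝ) ^ (s - 1) = 0 := by
    rw [Real.sinh_zero, Real.zero_rpow (by linarith : s - 1 ≠ 0)]
    simp
  rw [hF0, sub_zero] at h0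
  rw [integral_sub (hg.const_mul (1 - s)) (hG.const_mul μ),
    integral_const_mul, integral_const_mul] at h0
  linarith

lemma integrand_eq {t : ℝ} (ht : 0 < t) :
    (1 - Real.exp (-μ * t) * Real.cosh t * (t / Real.sinh t) ^ (2 - s)) * t ^ (s - 2)
      = t ^ (s - 2) - Real.exp (-μ * t) * Real.cosh t * Real.sinh t ^ (s - 2) := by
  have h := sinh_rpow_eq ht (s - 2)
  rw [show -(s - 2) = 2 - s by ring] at h
  rw [h]
  ring
end

end SubordinationAux

open SubordinationAux

/-- Subordination identity for Λ_{1−s} = ℒ_s^{−1}ℒ (key step in the proof of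
Proposition 4.3):
(1−s) ∫₀^∞ (1 − e^{−μt} cosh t (t/sinh t)^{2−s}) t^{s−2} dt
  = 2^{−s} μ Γ(s) Γ((μ+1−s)/2) / Γ((μ+1+s)/2). -/
theorem subordination_identity_homogeneous (s μ : ℝ)
    (hs0 : 0 < s) (hs1 : s < 1) (hμ : 0 < μ) :
    IntegrableOn (fun t : ℝ =>
        (1 - Real.exp (-μ * t) * Real.cosh t * (t / Real.sinh t) ^ (2 - s)) * t ^ (s - 2))
      (Set.Ioi (0 : ℝ)) volume ∧
    (1 - s) * ∫ t in Set.Ioi (0 : ℝ),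
        (1 - Real.exp (-μ * t) * Real.cosh t * (t / Real.sinh t) ^ (2 - s)) * t ^ (s - 2)
      = (2 : ℝ) ^ (-s) * μ * Real.Gamma s * Real.Gamma ((μ + 1 - s) / 2) /
          Real.Gamma ((μ + 1 + s) / 2) := by
  have heq : Set.EqOn
      (fun t : ℝ => t ^ (s - 2) - Real.exp (-μ * t) * Real.cosh t * Real.sinh t ^ (s - 2))
      (fun t : ℝ =>
        (1 - Real.exp (-μ * t) * Real.cosh t * (t / Real.sinh t) ^ (2 - s)) * t ^ (s - 2))
      (Set.Ioi 0) := fun t ht => (integrand_eq (ht : (0:ℝ) < t)).symm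
  constructor
  · exact (integrableOn_g hs0 hs1 hμ).congr_fun heq measurableSet_Ioi
  · have hint : ∫ t in Set.Ioi (0:ℝ),
        (1 - Real.exp (-μ * t) * Real.cosh t * (t / Real.sinh t) ^ (2 - s)) * t ^ (s - 2)
        = ∫ t in Set.Ioi (0:ℝ),
            (t ^ (s - 2) - Real.exp (-μ * t) * Real.cosh t * Real.sinh t ^ (s - 2)) :=
      (setIntegral_congr_fun measurableSet_Ioi heq).symm
    rw [hint, key_identity hs0 hs1 hμ, G_integral hs0 hs1 hμ]
    rw [show (μ + 1 - s)/2 + s = (μ + 1 + s)/2 by ring]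
    ring
end
end

section
/- Let a be a real number with −1 < a < 0. Then the function t ↦ cosh t · (sinh t)^{a−1} − t^{a−1} is Lebesgue integrable on (0,∞) and ∫₀^∞ (cosh t · (sinh t)^{a−1} − t^{a−1}) dt = 0. -/
open MeasureTheory Real Set Filter Topology

noncomputable section

/-! Auxiliary elementary inequalities for `sinh`/`cosh`. -/

lemma aux_cosh_sub_one_le {t : ℝ} (ht : 0 ≤ t) : Real.cosh t - 1 ≤ t * Real.sinh t := by
  have hF : ∀ x : ℝ, HasDerivAt (fun y => y * Real.sinh y - Real.cosh y + 1)
      (x * Real.cosh x) x := by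
    intro x
    have h := (((hasDerivAt_id x).mul (Real.hasDerivAt_sinh x)).sub
      (Real.hasDerivAt_cosh x)).add_const 1
    exact h.congr_deriv (by simp [id])
  have hmono : MonotoneOn (fun y => y * Real.sinh y - Real.cosh y + 1) (Ici (0:ℝ)) := by
    refine monotoneOn_of_deriv_nonneg (convex_Ici 0)
      (by fun_prop) (fun x _ => (hF x).differentiableAt.differentiableWithinAt) ?_
    intro x hx
    rw [interior_Ici, mem_Ioi] at hx
    rw [(hF x).deriv]
    have := Real.one_le_cosh x
    nlinarith
  have h0 := hmono (self_mem_Ici) ht ht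
  simp only [Real.sinh_zero, Real.cosh_zero, mul_zero, zero_sub] at h0
  linarith

lemma aux_sinh_le_mul_cosh {t : ℝ} (ht : 0 ≤ t) : Real.sinh t ≤ t * Real.cosh t := by
  have hF : ∀ x : ℝ, HasDerivAt (fun y => y * Real.cosh y - Real.sinh y)
      (x * Real.sinh x) x := by
    intro x
    have h := ((hasDerivAt_id x).mul (Real.hasDerivAt_cosh x)).sub (Real.hasDerivAt_sinh x)
    exact h.congr_deriv (by simp [id])
  have hmono : MonotoneOn (fun y => y * Real.cosh y - Real.sinh y) (Ici (0:ℝ)) := by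
    refine monotoneOn_of_deriv_nonneg (convex_Ici 0)
      (by fun_prop) (fun x _ => (hF x).differentiableAt.differentiableWithinAt) ?_
    intro x hx
    rw [interior_Ici, mem_Ioi] at hx
    rw [(hF x).deriv]
    have := Real.sinh_nonneg_iff.mpr hx.le
    positivity
  have h0 := hmono (self_mem_Ici) ht ht
  simp only [Real.sinh_zero, Real.cosh_zero, mul_zero, zero_sub] at h0
  linarith

lemma aux_sinh_sub_le_cube {t : ℝ} (ht : 0 ≤ t) (ht2 : t ≤ 1/2) :
    Real.sinh t - t ≤ t ^ 3 := by
  have hF : ∀ x : ℝ, HasDerivAt (fun y => y + y ^ 3 - Real.sinh y)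
      (1 + 3 * x ^ 2 - Real.cosh x) x := by
    intro x
    have h := ((hasDerivAt_id x).add (hasDerivAt_pow 3 x)).sub (Real.hasDerivAt_sinh x)
    exact h.congr_deriv (by norm_num)
  have hmono : MonotoneOn (fun y => y + y ^ 3 - Real.sinh y) (Icc (0:ℝ) (1/2)) := by
    refine monotoneOn_of_deriv_nonneg (convex_Icc 0 (1/2))
      (by fun_prop) (fun x hx => (hF x).differentiableAt.differentiableWithinAt) ?_
    intro x hx
    rw [interior_Icc, mem_Ioo] at hx
    rw [(hF x).deriv]
    have h1 := aux_cosh_sub_one_le hx.1.le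
    have h2 := aux_sinh_le_mul_cosh hx.1.le
    have h3 := Real.one_le_cosh x
    have hx2 : x ^ 2 ≤ 1/4 := by nlinarith [hx.1.le, hx.2.le]
    have hA : Real.cosh x - 1 ≤ x ^ 2 * Real.cosh x := by
      nlinarith [mul_le_mul_of_nonneg_left h2 hx.1.le]
    have hB : Real.cosh x ≤ 4/3 := by
      nlinarith [mul_le_mul_of_nonneg_right hx2 (by linarith : (0:ℝ) ≤ Real.cosh x)]
    nlinarith [mul_le_mul_of_nonneg_left hB (sq_nonneg x)]
  have h0 := hmono (left_mem_Icc.mpr (by norm_num)) ⟨ht, ht2⟩ ht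
  simp only [Real.sinh_zero, add_zero, zero_add] at h0
  norm_num at h0
  linarith

/-- Bernoulli-type bound: for `0 < x ≤ y` and `1 ≤ p`, `y^p - x^p ≤ p * y^(p-1) * (y - x)`. -/
lemma aux_rpow_sub_le_ge_one {x y p : ℝ} (hx : 0 < x) (hxy : x ≤ y) (hp : 1 ≤ p) :
    y ^ p - x ^ p ≤ p * y ^ (p - 1) * (y - x) := by
  have hy : 0 < y := hx.trans_le hxy
  have hb := one_add_mul_self_le_rpow_one_add (s := x / y - 1)
    (by have := div_nonneg hx.le hy.le; linarith) hp
  have he : (1:ℝ) + (x / y - 1) = x / y := by ring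
  rw [he] at hb
  -- hb : 1 + p * (x / y - 1) ≤ (x / y) ^ p
  have hdiv : (x / y) ^ p = x ^ p / y ^ p := Real.div_rpow hx.le hy.le p
  rw [hdiv] at hb
  have hyp : (0:ℝ) < y ^ p := Real.rpow_pos_of_pos hy p
  have hys : y ^ p = y ^ (p - 1) * y := by
    rw [← Real.rpow_add_one hy.ne' (p - 1), sub_add_cancel]
  have hb2 : (1 + p * (x / y - 1)) * y ^ p ≤ x ^ p := by
    calc (1 + p * (x / y - 1)) * y ^ p ≤ (x ^ p / y ^ p) * y ^ p :=
          mul_le_mul_of_nonneg_right hb hyp.le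
      _ = x ^ p := by field_simp
  have hkey : (x / y - 1) * y ^ p = (x - y) * y ^ (p - 1) := by
    rw [hys]
    field_simp
  have hb3 : y ^ p + p * ((x - y) * y ^ (p - 1)) ≤ x ^ p := by
    calc y ^ p + p * ((x - y) * y ^ (p - 1)) = (1 + p * (x / y - 1)) * y ^ p := by
          rw [← hkey]; ring
      _ ≤ x ^ p := hb2
  nlinarith [hb3]

/-- Bernoulli-type bound: for `0 < x ≤ y` and `0 ≤ p ≤ 1`, `y^p - x^p ≤ p * x^(p-1) * (y - x)`. -/
lemma aux_rpow_sub_le_le_one {x y p : ℝ} (hx : 0 < x) (hxy : x ≤ y)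
    (hp0 : 0 ≤ p) (hp1 : p ≤ 1) :
    y ^ p - x ^ p ≤ p * x ^ (p - 1) * (y - x) := by
  have hb := rpow_one_add_le_one_add_mul_self (s := y / x - 1)
    (by have := div_nonneg (hx.le.trans hxy) hx.le; linarith) hp0 hp1
  have he : (1:ℝ) + (y / x - 1) = y / x := by ring
  rw [he] at hb
  -- hb : (y / x) ^ p ≤ 1 + p * (y / x - 1)
  have hdiv : (y / x) ^ p = y ^ p / x ^ p := Real.div_rpow (hx.le.trans hxy) hx.le p
  rw [hdiv] at hb
  have hxp : (0:ℝ) < x ^ p := Real.rpow_pos_of_pos hx p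
  have hxs : x ^ p = x ^ (p - 1) * x := by
    rw [← Real.rpow_add_one hx.ne' (p - 1), sub_add_cancel]
  have hb2 : y ^ p ≤ (1 + p * (y / x - 1)) * x ^ p := by
    calc y ^ p = (y ^ p / x ^ p) * x ^ p := by field_simp
      _ ≤ (1 + p * (y / x - 1)) * x ^ p := mul_le_mul_of_nonneg_right hb hxp.le
  have hkey : (y / x - 1) * x ^ p = (y - x) * x ^ (p - 1) := by
    rw [hxs]
    field_simp
  have hb3 : y ^ p ≤ x ^ p + p * ((y - x) * x ^ (p - 1)) := by
    calc y ^ p ≤ (1 + p * (y / x - 1)) * x ^ p := hb2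
      _ = x ^ p + p * ((y - x) * x ^ (p - 1)) := by rw [← hkey]; ring
  nlinarith [hb3]

/-- Key estimate: `t^(a-1) - (sinh t)^(a-1) ≤ (1-a) * (sinh t - t) * t^(a-2)` for `t > 0`. -/
lemma aux_key_neg {a t : ℝ} (ha2 : a < 0) (ht : 0 < t) :
    t ^ (a - 1) - Real.sinh t ^ (a - 1) ≤ (1 - a) * (Real.sinh t - t) * t ^ (a - 2) := by
  set s := Real.sinh t with hs
  have hts : t ≤ s := (Real.self_le_sinh_iff).mpr ht.le
  have hspos : 0 < s := ht.trans_le hts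
  set q := 1 - a with hq
  have hq1 : 1 ≤ q := by simp [hq]; linarith
  have hqpos : 0 < q := by linarith
  have hber := aux_rpow_sub_le_ge_one ht hts hq1
  -- s^q - t^q ≤ q * s^(q-1) * (s - t)
  have htq : (0:ℝ) < t ^ q := Real.rpow_pos_of_pos ht q
  have hsq : (0:ℝ) < s ^ q := Real.rpow_pos_of_pos hspos q
  have hta : t ^ (a - 1) = (t ^ q)⁻¹ := by
    rw [← Real.rpow_neg ht.le]; congr 1; ring
  have hsa : s ^ (a - 1) = (s ^ q)⁻¹ := by
    rw [← Real.rpow_neg hspos.le]; congr 1; ring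
  rw [hta, hsa]
  have hstep : (t ^ q)⁻¹ - (s ^ q)⁻¹ = (s ^ q - t ^ q) / (t ^ q * s ^ q) := by
    field_simp
  rw [hstep]
  have hsq1 : s ^ (q - 1) = s ^ q / s := by
    rw [← Real.rpow_sub_one hspos.ne']
  have h1 : (s ^ q - t ^ q) / (t ^ q * s ^ q) ≤ q * (s - t) / (t ^ q * s) := by
    rw [div_le_div_iff₀ (by positivity) (by positivity)]
    have hnum : s ^ q - t ^ q ≤ q * (s ^ q / s) * (s - t) := by
      rw [← hsq1]; exact hber
    have hst : 0 ≤ s - t := by linarith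
    calc (s ^ q - t ^ q) * (t ^ q * s) ≤ (q * (s ^ q / s) * (s - t)) * (t ^ q * s) := by
          apply mul_le_mul_of_nonneg_right hnum (by positivity)
      _ = q * (s - t) * (t ^ q * s ^ q) := by field_simp
  have h2 : q * (s - t) / (t ^ q * s) ≤ q * (s - t) / (t ^ q * t) := by
    apply div_le_div_of_nonneg_left (mul_nonneg hqpos.le (by linarith)) (by positivity)
    exact mul_le_mul_of_nonneg_left hts (le_of_lt htq)
  have h3 : q * (s - t) / (t ^ q * t) = (1 - a) * (s - t) * t ^ (a - 2) := by
    have htq1 : t ^ q * t = t ^ (q + 1) := by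
      rw [Real.rpow_add_one ht.ne']
    rw [htq1]
    have : t ^ (a - 2) = (t ^ (q + 1))⁻¹ := by
      rw [← Real.rpow_neg ht.le]; congr 1; ring
    rw [this, hq]
    field_simp
  linarith [h1, h2, h3.le, h3.ge]

/-- The pointwise bound near zero: `|f t| ≤ (2 - a) * t^(a+1)` on `(0, 1/2]`. -/
lemma aux_bound_near_zero {a t : ℝ} (ha1 : -1 < a) (ha2 : a < 0)
    (ht : 0 < t) (ht2 : t ≤ 1/2) :
    |Real.cosh t * Real.sinh t ^ (a - 1) - t ^ (a - 1)| ≤ (2 - a) * t ^ (a + 1) := by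
  set s := Real.sinh t with hs
  have hts : t ≤ s := (Real.self_le_sinh_iff).mpr ht.le
  have hspos : 0 < s := ht.trans_le hts
  have hta1 : (0:ℝ) < t ^ (a + 1) := Real.rpow_pos_of_pos ht _
  have hsa1 : (0:ℝ) < s ^ (a - 1) := Real.rpow_pos_of_pos hspos _
  have hcube : s - t ≤ t ^ 3 := aux_sinh_sub_le_cube ht.le ht2
  rw [abs_le]
  constructor
  · -- lower bound : -(2-a) t^(a+1) ≤ f t
    have h1 : Real.cosh t * s ^ (a - 1) - t ^ (a - 1) ≥ s ^ (a - 1) - t ^ (a - 1) := by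
      nlinarith [Real.one_le_cosh t, hsa1]
    have h2 : t ^ (a - 1) - s ^ (a - 1) ≤ (1 - a) * (s - t) * t ^ (a - 2) :=
      aux_key_neg ha2 ht
    have h3 : (1 - a) * (s - t) * t ^ (a - 2) ≤ (1 - a) * t ^ 3 * t ^ (a - 2) := by
      have hta2 : (0:ℝ) < t ^ (a - 2) := Real.rpow_pos_of_pos ht _

      have h1a : (0:ℝ) ≤ 1 - a := by linarith
      exact mul_le_mul_of_nonneg_right (mul_le_mul_of_nonneg_left hcube h1a) hta2.le
    have h4 : (1 - a) * t ^ 3 * t ^ (a - 2) = (1 - a) * t ^ (a + 1) := by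
      rw [mul_assoc, ← Real.rpow_natCast t 3, ← Real.rpow_add ht]
      congr 2
      push_cast
      ring
    have h5 : (1 - a) * t ^ (a + 1) ≤ (2 - a) * t ^ (a + 1) := by nlinarith
    linarith
  · -- upper bound : f t ≤ (2-a) t^(a+1)
    have h1 : Real.cosh t * s ^ (a - 1) - t ^ (a - 1)
        ≤ (Real.cosh t - 1) * s ^ (a - 1) := by
      have hle : s ^ (a - 1) ≤ t ^ (a - 1) :=
        Real.rpow_le_rpow_of_nonpos ht hts (by linarith)
      nlinarith
    have h2 : (Real.cosh t - 1) * s ^ (a - 1) ≤ t * s * s ^ (a - 1) := by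
      have := aux_cosh_sub_one_le ht.le
      nlinarith
    have h3 : t * s * s ^ (a - 1) = t * s ^ a := by
      rw [mul_assoc]
      congr 1
      rw [mul_comm, ← Real.rpow_add_one hspos.ne']
      norm_num
    have h4 : t * s ^ a ≤ t * t ^ a := by
      have : s ^ a ≤ t ^ a := Real.rpow_le_rpow_of_nonpos ht hts ha2.le
      nlinarith
    have h5 : t * t ^ a = t ^ (a + 1) := by
      rw [mul_comm, ← Real.rpow_add_one ht.ne']
    have h6 : t ^ (a + 1) ≤ (2 - a) * t ^ (a + 1) := by nlinarith
    linarith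

lemma aux_tendsto_sinh_atTop : Tendsto Real.sinh atTop atTop := by
  apply tendsto_atTop_mono' atTop _ tendsto_id
  filter_upwards [eventually_ge_atTop (0:ℝ)] with x hx
  exact (Real.self_le_sinh_iff).mpr hx

/-- The vanishing integral ∫₀^∞ (cosh t (sinh t)^{a−1} − t^{a−1}) dt = 0 for
−1 < a < 0 (used in the proofs of Propositions 4.1 and 4.3). -/
theorem vanishing_integral (a : ℝ) (ha1 : -1 < a) (ha2 : a < 0) :
    IntegrableOn (fun t : ℝ => Real.cosh t * Real.sinh t ^ (a - 1) - t ^ (a - 1))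
      (Set.Ioi (0 : ℝ)) volume ∧
    ∫ t in Set.Ioi (0 : ℝ), (Real.cosh t * Real.sinh t ^ (a - 1) - t ^ (a - 1)) = 0 := by
  have ha0 : a ≠ 0 := ha2.ne
  set f : ℝ → ℝ := fun t => Real.cosh t * Real.sinh t ^ (a - 1) - t ^ (a - 1) with hf
  set G : ℝ → ℝ := fun t => (Real.sinh t ^ a - t ^ a) / a with hG
  -- continuity of f on (0, ∞)
  have hcont : ContinuousOn f (Ioi (0:ℝ)) := by
    intro t ht
    rw [mem_Ioi] at ht
    have h1 : ContinuousAt (fun t : ℝ => Real.sinh t ^ (a - 1)) t :=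
      (Real.continuousAt_rpow_const _ _
        (Or.inl (Real.sinh_pos_iff.mpr ht).ne')).comp Real.continuous_sinh.continuousAt
    have h2 : ContinuousAt (fun t : ℝ => t ^ (a - 1)) t :=
      Real.continuousAt_rpow_const _ _ (Or.inl ht.ne')
    exact ((Real.continuous_cosh.continuousAt.mul h1).sub h2).continuousWithinAt
  -- derivative of G on (0, ∞)
  have hGderiv : ∀ x : ℝ, 0 < x → HasDerivAt G (f x) x := by
    intro x hx
    have hsx : 0 < Real.sinh x := Real.sinh_pos_iff.mpr hx
    have h1 : HasDerivAt (fun t : ℝ => Real.sinh t ^ a)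
        (a * Real.sinh x ^ (a - 1) * Real.cosh x) x :=
      (Real.hasDerivAt_rpow_const (Or.inl hsx.ne')).comp x (Real.hasDerivAt_sinh x)
    have h2 : HasDerivAt (fun t : ℝ => t ^ a) (a * x ^ (a - 1)) x :=
      Real.hasDerivAt_rpow_const (Or.inl hx.ne')
    have h3 := (h1.sub h2).div_const a
    exact h3.congr_deriv (by
      rw [mul_assoc, ← mul_sub, mul_div_cancel_left₀ _ ha0]; simp only [hf]; ring)
  -- G tends to 0 at +∞
  have hGtop : Tendsto G atTop (𝓝 0) := by
    have h0 : Tendsto (fun x : ℝ => x ^ a) atTop (𝓝 0) := by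
      simpa only [neg_neg] using tendsto_rpow_neg_atTop (by linarith : (0:ℝ) < -a)
    have h1 : Tendsto (fun t : ℝ => Real.sinh t ^ a) atTop (𝓝 0) :=
      h0.comp aux_tendsto_sinh_atTop
    have := (h1.sub h0).div_const a
    simpa using this
  -- integrability on (0, 1/2]
  have hI1 : IntegrableOn f (Ioc (0:ℝ) (1/2)) volume := by
    have hmeas : AEStronglyMeasurable f (volume.restrict (Ioc (0:ℝ) (1/2))) :=
      (hcont.mono Ioc_subset_Ioi_self).aestronglyMeasurable measurableSet_Ioc
    have hbound : IntegrableOn (fun t : ℝ => (2 - a) * t ^ (a + 1))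
        (Ioc (0:ℝ) (1/2)) volume := by
      have := (intervalIntegral.intervalIntegrable_rpow' (a := 0) (b := 1/2)
        (by linarith : (-1:ℝ) < a + 1)).1
      exact this.const_mul _
    refine Integrable.mono' hbound hmeas ?_
    filter_upwards [ae_restrict_mem measurableSet_Ioc] with t ht
    exact aux_bound_near_zero ha1 ha2 ht.1 ht.2
  -- integrability on (1/2, ∞)
  have hsinh_half : 0 < Real.sinh (1/2) := Real.sinh_pos_iff.mpr (by norm_num)
  have hI2a : IntegrableOn (fun t : ℝ => Real.cosh t * Real.sinh t ^ (a - 1))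
      (Ioi (1/2 : ℝ)) volume := by
    have hderiv : ∀ x ∈ Ici (1/2 : ℝ), HasDerivAt (fun t => Real.sinh t ^ a / a)
        (Real.cosh x * Real.sinh x ^ (a - 1)) x := by
      intro x hx
      have hxpos : (0:ℝ) < x := lt_of_lt_of_le (by norm_num) hx
      have hsx : 0 < Real.sinh x := Real.sinh_pos_iff.mpr hxpos
      have h1 : HasDerivAt (fun t : ℝ => Real.sinh t ^ a)
          (a * Real.sinh x ^ (a - 1) * Real.cosh x) x :=
        (Real.hasDerivAt_rpow_const (Or.inl hsx.ne')).comp x (Real.hasDerivAt_sinh x)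
      have h3 := h1.div_const a
      exact h3.congr_deriv (by rw [mul_assoc, mul_div_cancel_left₀ _ ha0]; ring)
    have htop : Tendsto (fun t : ℝ => Real.sinh t ^ a / a) atTop (𝓝 (0 / a)) := by
      apply Tendsto.div_const
      have h0 : Tendsto (fun x : ℝ => x ^ a) atTop (𝓝 0) := by
        simpa only [neg_neg] using tendsto_rpow_neg_atTop (by linarith : (0:ℝ) < -a)
      exact h0.comp aux_tendsto_sinh_atTop
    refine integrableOn_Ioi_deriv_of_nonneg' hderiv ?_ htop
    intro x hx
    have hxpos : (0:ℝ) < x := lt_trans (by norm_num) hx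
    have hsx : 0 < Real.sinh x := Real.sinh_pos_iff.mpr hxpos
    positivity
  have hI2b : IntegrableOn (fun t : ℝ => t ^ (a - 1)) (Ioi (1/2 : ℝ)) volume :=
    integrableOn_Ioi_rpow_of_lt (by linarith) (by norm_num)
  have hI2 : IntegrableOn f (Ioi (1/2 : ℝ)) volume := hI2a.sub hI2b
  -- total integrability
  have hIoi : Ioc (0:ℝ) (1/2) ∪ Ioi (1/2 : ℝ) = Ioi (0:ℝ) :=
    Ioc_union_Ioi_eq_Ioi (by norm_num)
  have hInt : IntegrableOn f (Ioi (0:ℝ)) volume := by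
    rw [← hIoi]
    exact hI1.union hI2
  refine ⟨hInt, ?_⟩
  -- the integral over (δ, ∞) equals -G δ for δ > 0
  have key : ∀ δ : ℝ, 0 < δ → ∫ t in Ioi δ, f t = -G δ := by
    intro δ hδ
    have hcontG : ContinuousWithinAt G (Ici δ) δ :=
      (hGderiv δ hδ).continuousAt.continuousWithinAt
    have hderiv : ∀ x ∈ Ioi δ, HasDerivAt G (f x) x :=
      fun x hx => hGderiv x (hδ.trans hx)
    have hint : IntegrableOn f (Ioi δ) volume :=
      hInt.mono (Ioi_subset_Ioi hδ.le) le_rfl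
    rw [integral_Ioi_of_hasDerivAt_of_tendsto hcontG hderiv hint hGtop]
    ring
  -- G tends to 0 as δ → 0⁺
  have hG0 : Tendsto G (nhdsWithin 0 (Ioi 0)) (𝓝 0) := by
    have hsq : Tendsto (fun t : ℝ => t ^ (a + 2)) (nhdsWithin 0 (Ioi 0)) (𝓝 0) := by
      have h := (Real.continuousAt_rpow_const 0 (a + 2)
        (Or.inr (by linarith))).tendsto
      rw [Real.zero_rpow (by linarith : a + 2 ≠ 0)] at h
      exact h.mono_left nhdsWithin_le_nhds
    refine squeeze_zero' (t₀ := nhdsWithin 0 (Ioi 0)) (g := fun t => t ^ (a + 2)) ?_ ?_ hsq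
    · filter_upwards [self_mem_nhdsWithin] with t ht
      rw [mem_Ioi] at ht
      have hts : t ≤ Real.sinh t := (Real.self_le_sinh_iff).mpr ht.le
      have hle : Real.sinh t ^ a ≤ t ^ a := Real.rpow_le_rpow_of_nonpos ht hts ha2.le
      have : Real.sinh t ^ a - t ^ a ≤ 0 := by linarith
      simp only [hG]
      exact div_nonneg_of_nonpos this ha2.le
    · have hmem : Ioc (0:ℝ) (1/2) ∈ nhdsWithin (0:ℝ) (Ioi 0) := by
        apply mem_nhdsWithin.mpr
        exact ⟨Iio (1/2), isOpen_Iio, by norm_num, fun x hx => ⟨hx.2, le_of_lt hx.1⟩⟩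
      filter_upwards [hmem] with t ht
      obtain ⟨ht0, ht2⟩ := ht
      -- G t ≤ t ^ (a+2)
      set s := Real.sinh t with hs
      have hts : t ≤ s := (Real.self_le_sinh_iff).mpr ht0.le
      have hspos : 0 < s := ht0.trans_le hts
      set p := -a with hp
      have hp0 : 0 < p := by simp [hp]; linarith
      have hp1 : p ≤ 1 := by simp [hp]; linarith
      have hber := aux_rpow_sub_le_le_one ht0 hts hp0.le hp1
      -- s^p - t^p ≤ p * t^(p-1) * (s - t)
      have htp : (0:ℝ) < t ^ p := Real.rpow_pos_of_pos ht0 p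
      have hsp : (0:ℝ) < s ^ p := Real.rpow_pos_of_pos hspos p
      have hta : t ^ a = (t ^ p)⁻¹ := by
        rw [← Real.rpow_neg ht0.le]; congr 1; simp [hp]
      have hsa : s ^ a = (s ^ p)⁻¹ := by
        rw [← Real.rpow_neg hspos.le]; congr 1; simp [hp]
      have hGt : G t = (t ^ a - s ^ a) / p := by
        simp only [hG, hp]
        rw [div_eq_div_iff ha0 (by linarith : (-a:ℝ) ≠ 0)]
        ring
      rw [hGt, hta, hsa]
      have hstep : (t ^ p)⁻¹ - (s ^ p)⁻¹ = (s ^ p - t ^ p) / (t ^ p * s ^ p) := by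
        field_simp
      rw [hstep]
      have hcube : s - t ≤ t ^ 3 := aux_sinh_sub_le_cube ht0.le ht2
      have htp1 : (0:ℝ) < t ^ (p - 1) := Real.rpow_pos_of_pos ht0 _
      have hnum : s ^ p - t ^ p ≤ p * t ^ (p - 1) * t ^ 3 := by
        have hst : 0 ≤ s - t := by linarith
        have := mul_le_mul_of_nonneg_left hcube (mul_nonneg hp0.le htp1.le)
        nlinarith [this, hber]
      have h1 : (s ^ p - t ^ p) / (t ^ p * s ^ p) ≤ (p * t ^ (p - 1) * t ^ 3) / (t ^ p * t ^ p) := by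
        apply div_le_div₀ (by positivity) hnum (by positivity)
        have : t ^ p ≤ s ^ p := Real.rpow_le_rpow ht0.le hts hp0.le
        nlinarith
      have h2 : (p * t ^ (p - 1) * t ^ 3) / (t ^ p * t ^ p) = p * t ^ (a + 2) := by
        rw [mul_assoc, ← Real.rpow_natCast t 3, ← Real.rpow_add ht0, ← Real.rpow_add ht0,
          mul_div_assoc, ← Real.rpow_sub ht0]
        congr 1
        push_cast
        rw [hp]
        ring
      have h3 : p * t ^ (a + 2) ≤ t ^ (a + 2) := by
        have hta2 : (0:ℝ) ≤ t ^ (a + 2) := (Real.rpow_pos_of_pos ht0 _).le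
        nlinarith
      have h4 : (s ^ p - t ^ p) / (t ^ p * s ^ p) ≤ p * t ^ (a + 2) :=
        h1.trans (le_of_eq h2)
      calc (s ^ p - t ^ p) / (t ^ p * s ^ p) / p ≤ (p * t ^ (a + 2)) / p :=
            (div_le_div_iff_of_pos_right hp0).mpr h4
        _ = t ^ (a + 2) := by field_simp
  -- pass to the limit along δ = (n+1)⁻¹
  set u : ℕ → ℝ := fun n => ((n : ℝ) + 1)⁻¹ with hu
  have hupos : ∀ n, 0 < u n := fun n => by positivity
  have hmono : Monotone fun n => Ioi (u n) := by
    intro n m hnm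
    apply Ioi_subset_Ioi
    have h1 : ((n:ℝ) + 1) ≤ (m:ℝ) + 1 := by
      have : (n:ℝ) ≤ (m:ℝ) := by exact_mod_cast hnm
      linarith
    exact inv_anti₀ (by positivity) h1
  have hunion : (⋃ n, Ioi (u n)) = Ioi (0:ℝ) := by
    ext x
    simp only [mem_iUnion, mem_Ioi]
    constructor
    · rintro ⟨n, hn⟩
      exact (hupos n).trans hn
    · intro hx
      obtain ⟨n, hn⟩ := exists_nat_one_div_lt hx
      exact ⟨n, by rwa [one_div] at hn⟩
  have hlim1 : Tendsto (fun n => ∫ t in Ioi (u n), f t) atTop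
      (𝓝 (∫ t in Ioi (0:ℝ), f t)) := by
    have h := tendsto_setIntegral_of_monotone (fun n => measurableSet_Ioi) hmono
      (by rw [hunion]; exact hInt)
    rwa [hunion] at h
  have hlim2 : Tendsto (fun n => ∫ t in Ioi (u n), f t) atTop (𝓝 0) := by
    have hueq : ∀ n, ∫ t in Ioi (u n), f t = -G (u n) := fun n => key _ (hupos n)
    simp_rw [hueq]
    have hu0 : Tendsto u atTop (nhdsWithin 0 (Ioi 0)) := by
      apply tendsto_nhdsWithin_of_tendsto_nhds_of_eventually_within
      · have h := tendsto_one_div_add_atTop_nhds_zero_nat (𝕜 := ℝ)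
        simpa [hu, one_div] using h
      · exact Eventually.of_forall fun n => hupos n
    have h := (hG0.comp hu0).neg
    simpa using h
  exact tendsto_nhds_unique hlim1 hlim2
end
end

section
/- Let x > 0 and let α, β be real numbers with 0 < α ≤ β. Then x^{β−α} · Γ(x+α) / Γ(x+β) ≤ (x+β)/(x+α). -/
open Real

noncomputable section

/-- Key lemma: for `a > 0` and `c ≥ 1`, `a^c * Γ(a) ≤ Γ(a+c)`, by log-convexity. -/
lemma rpow_mul_Gamma_le (a c : ℝ) (ha : 0 < a) (hc : 1 ≤ c) :
    a ^ c * Real.Gamma a ≤ Real.Gamma (a + c) := by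
  have hc0 : 0 < c := lt_of_lt_of_le one_pos hc
  have hΓa : 0 < Real.Gamma a := Real.Gamma_pos_of_pos ha
  have hΓac : 0 < Real.Gamma (a + c) := Real.Gamma_pos_of_pos (by linarith)
  have h1 : (0:ℝ) ≤ 1 - 1/c := by
    have : 1/c ≤ 1 := by rw [div_le_one hc0]; linarith
    linarith
  have h2 : (0:ℝ) ≤ 1/c := by positivity
  have hsum : (1 - 1/c) + 1/c = 1 := by ring
  have hconv := Real.convexOn_log_Gamma.2 (Set.mem_Ioi.mpr ha)
    (Set.mem_Ioi.mpr (show (0:ℝ) < a + c by linarith)) h1 h2 hsum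
  have hpt : (1 - 1/c) • a + (1/c) • (a + c) = a + 1 := by
    field_simp
    rw [smul_eq_mul, smul_eq_mul, div_mul_eq_mul_div, div_mul_eq_mul_div, ← add_div,
      div_eq_iff hc0.ne']; ring
  rw [hpt] at hconv
  simp only [Function.comp_apply, smul_eq_mul] at hconv
  -- hconv : log Γ(a+1) ≤ (1-1/c) * log Γ a + (1/c) * log Γ(a+c)
  rw [Real.Gamma_add_one (ne_of_gt ha), Real.log_mul (ne_of_gt ha) (ne_of_gt hΓa)] at hconv
  -- so  log a + log Γ a ≤ (1-1/c) log Γ a + (1/c) log Γ(a+c)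
  have key : c * Real.log a + Real.log (Real.Gamma a) ≤ Real.log (Real.Gamma (a + c)) := by
    have h := mul_le_mul_of_nonneg_left hconv hc0.le
    have hR : c * ((1 - 1/c) * Real.log (Real.Gamma a) + 1/c * Real.log (Real.Gamma (a + c)))
        = c * Real.log (Real.Gamma a) - Real.log (Real.Gamma a) + Real.log (Real.Gamma (a + c)) := by
      field_simp
    rw [hR, mul_add] at h
    linarith
  calc a ^ c * Real.Gamma a
      = Real.exp (c * Real.log a + Real.log (Real.Gamma a)) := by
        rw [Real.exp_add, Real.exp_log hΓa, ← Real.log_rpow ha, Real.exp_log (Real.rpow_pos_of_pos ha c)]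
    _ ≤ Real.exp (Real.log (Real.Gamma (a + c))) := Real.exp_le_exp.mpr key
    _ = Real.Gamma (a + c) := Real.exp_log hΓac

/-- Gamma ratio bound from Section 5.3 of the paper:
x^{β−α} Γ(x+α)/Γ(x+β) ≤ (x+β)/(x+α) for x > 0 and 0 < α ≤ β. -/
theorem gamma_ratio_bound (x α β : ℝ) (hx : 0 < x) (hα : 0 < α) (hαβ : α ≤ β) :
    x ^ (β - α) * Real.Gamma (x + α) / Real.Gamma (x + β) ≤ (x + β) / (x + α) := by
  have hxa : (0:ℝ) < x + α := by linarith
  have hxb : (0:ℝ) < x + β := by linarith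
  have hΓa : 0 < Real.Gamma (x + α) := Real.Gamma_pos_of_pos hxa
  have hΓb : 0 < Real.Gamma (x + β) := Real.Gamma_pos_of_pos hxb
  have key := rpow_mul_Gamma_le (x + α) (β + 1 - α) hxa (by linarith)
  have heq : x + α + (β + 1 - α) = (x + β) + 1 := by ring
  rw [heq, Real.Gamma_add_one (ne_of_gt hxb)] at key
  -- key : (x+α)^(β+1-α) * Γ(x+α) ≤ (x+β) * Γ(x+β)
  have hsplit : (x + α) ^ (β + 1 - α) = (x + α) ^ (β - α) * (x + α) := by
    rw [show β + 1 - α = (β - α) + 1 by ring, Real.rpow_add hxa, Real.rpow_one]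
  rw [hsplit] at key
  have hxle : x ^ (β - α) ≤ (x + α) ^ (β - α) :=
    Real.rpow_le_rpow hx.le (by linarith) (by linarith)
  have hxp : 0 < x ^ (β - α) := Real.rpow_pos_of_pos hx _
  have hap : 0 < (x + α) ^ (β - α) := Real.rpow_pos_of_pos hxa _
  rw [div_le_div_iff₀ hΓb hxa]
  calc x ^ (β - α) * Real.Gamma (x + α) * (x + α)
      ≤ (x + α) ^ (β - α) * Real.Gamma (x + α) * (x + α) := by
        have := mul_le_mul_of_nonneg_right hxle hΓa.le
        nlinarith
    _ = (x + α) ^ (β - α) * (x + α) * Real.Gamma (x + α) := by ring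
    _ ≤ (x + β) * Real.Gamma (x + β) := key
end
end
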